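/- arXiv:2111.01010 — 3 statements merged into one kernel-verified Lean document; each statement's English description precedes it below -/
import Mathlib

section
/- Let X = (X_1,…,X_n) be a collection of closed convex subsets of ℝ^d realizing a code C. Suppose the nonempty codewords of C can be enumerated c_1, c_2, …, c_k so that (i) c_1 ⊂ c_2 ⊃ c_3 ⊂ c_4 ⊃ ⋯ ⊂ c_{k−1} ⊃ c_k (alternating strict containments between consecutive codewords), (ii) no other containments occur between distinct nonempty codewords of C, and (iii) c_i ∩ c_{i+1} ∩ c_{i+2} ≠ ∅ for all i ∈ [k−2]. Then the union X_1 ∪ X_2 ∪ ⋯ ∪ X_n is a convex set. -/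
open Set

noncomputable section

/-- Euclidean space `ℝ^d`. -/
abbrev Euc (d : ℕ) : Type := EuclideanSpace ℝ (Fin d)

/-- The code of a collection of sets `U = (U 0, …, U (n-1))` in `ℝ^d`. -/
def codeOf {n d : ℕ} (U : Fin n → Set (Euc d)) : Set (Finset (Fin n)) :=
  {σ | ∃ p : Euc d, ∀ i : Fin n, p ∈ U i ↔ i ∈ σ}

/-- `U` is an open convex realization of the code `C`. -/
def IsOpenReal {n d : ℕ} (C : Set (Finset (Fin n))) (U : Fin n → Set (Euc d)) : Prop :=
  (∀ i, Convex ℝ (U i)) ∧ (∀ i, IsOpen (U i)) ∧ codeOf U = C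

/-- `X` is a closed convex realization of the code `C`. -/
def IsClosedReal {n d : ℕ} (C : Set (Finset (Fin n))) (X : Fin n → Set (Euc d)) : Prop :=
  (∀ i, Convex ℝ (X i)) ∧ (∀ i, IsClosed (X i)) ∧ codeOf X = C

/-- `C` has an open convex realization in `ℝ^d`. -/
def HasOpenReal {n : ℕ} (C : Set (Finset (Fin n))) (d : ℕ) : Prop :=
  ∃ U : Fin n → Set (Euc d), IsOpenReal C U

/-- `C` has a closed convex realization in `ℝ^d`. -/
def HasClosedReal {n : ℕ} (C : Set (Finset (Fin n))) (d : ℕ) : Prop :=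
  ∃ X : Fin n → Set (Euc d), IsClosedReal C X

/-- `U` is a non-degenerate open convex realization of `C`: it is an open convex
realization and the closures of its sets realize the same code. -/
def IsNondegOpenReal {n d : ℕ} (C : Set (Finset (Fin n))) (U : Fin n → Set (Euc d)) : Prop :=
  IsOpenReal C U ∧ codeOf (fun i => closure (U i)) = C

/-- `X` is a non-degenerate closed convex realization of `C`: it is a closed convex
realization and the interiors of its sets realize the same code. -/
def IsNondegClosedReal {n d : ℕ} (C : Set (Finset (Fin n))) (X : Fin n → Set (Euc d)) : Prop :=
  IsClosedReal C X ∧ codeOf (fun i => interior (X i)) = C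

/-- `C` has a non-degenerate (open or closed) convex realization in `ℝ^d`. -/
def HasNondegReal {n : ℕ} (C : Set (Finset (Fin n))) (d : ℕ) : Prop :=
  (∃ U : Fin n → Set (Euc d), IsNondegOpenReal C U) ∨
  (∃ X : Fin n → Set (Euc d), IsNondegClosedReal C X)

/-- Open embedding dimension (`⊤` if no open convex realization exists). -/
def odim {n : ℕ} (C : Set (Finset (Fin n))) : ℕ∞ :=
  sInf {e : ℕ∞ | ∃ d : ℕ, e = d ∧ HasOpenReal C d}

/-- Closed embedding dimension (`⊤` if no closed convex realization exists). -/
def cdim {n : ℕ} (C : Set (Finset (Fin n))) : ℕ∞ :=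
  sInf {e : ℕ∞ | ∃ d : ℕ, e = d ∧ HasClosedReal C d}

/-- Non-degenerate embedding dimension (`⊤` if no non-degenerate realization exists). -/
def nddim {n : ℕ} (C : Set (Finset (Fin n))) : ℕ∞ :=
  sInf {e : ℕ∞ | ∃ d : ℕ, e = d ∧ HasNondegReal C d}

namespace RigidAux

open AffineMap Metric

variable {n d k : ℕ}

/-- The exact codeword (as a finset of neurons) of a point. -/
noncomputable def sig (X : Fin n → Set (Euc d)) (z : Euc d) : Finset (Fin n) := by
  classical exact Finset.univ.filter (fun i => z ∈ X i)

lemma mem_sig (X : Fin n → Set (Euc d)) {z : Euc d} {i : Fin n} :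
    i ∈ sig X z ↔ z ∈ X i := by
  classical simp [sig]

lemma sig_mem_code (X : Fin n → Set (Euc d)) (z : Euc d) : sig X z ∈ codeOf X :=
  ⟨z, fun i => (mem_sig X).symm⟩

lemma mem_union_iff (X : Fin n → Set (Euc d)) {z : Euc d} :
    z ∈ (⋃ i, X i) ↔ (sig X z).Nonempty := by
  constructor
  · intro hz
    obtain ⟨i, hi⟩ := mem_iUnion.1 hz
    exact ⟨i, (mem_sig X).2 hi⟩
  · rintro ⟨i, hi⟩
    exact mem_iUnion.2 ⟨i, (mem_sig X).1 hi⟩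

lemma sig_mid (X : Fin n → Set (Euc d)) (hconv : ∀ i, Convex ℝ (X i))
    {x y z : Euc d} (hz : z ∈ segment ℝ x y) : sig X x ∩ sig X y ⊆ sig X z := by
  intro i hi
  rw [Finset.mem_inter, mem_sig, mem_sig] at hi
  exact (mem_sig X).2 ((hconv i).segment_subset hi.1 hi.2 hz)

lemma sig_local (X : Fin n → Set (Euc d)) (hclosed : ∀ i, IsClosed (X i)) (z : Euc d) :
    ∃ δ > 0, ∀ y, dist y z < δ → sig X y ⊆ sig X z := by
  classical
  set V : Set (Euc d) := ⋂ i ∈ Finset.univ.filter (fun i => z ∉ X i), (X i)ᶜ with hV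
  have hVopen : IsOpen V := isOpen_biInter_finset (fun i _ => (hclosed i).isOpen_compl)
  have hzV : z ∈ V := by
    rw [hV]
    refine mem_iInter₂.2 fun i hi => ?_
    exact (Finset.mem_filter.1 hi).2
  obtain ⟨δ, hδ, hball⟩ := Metric.isOpen_iff.1 hVopen z hzV
  refine ⟨δ, hδ, fun y hy i hiy => ?_⟩
  by_contra hzc
  have hyV : y ∈ V := hball (by simpa [Metric.mem_ball] using hy)
  have : y ∈ (X i)ᶜ := by
    rw [hV] at hyV
    exact mem_iInter₂.1 hyV i (Finset.mem_filter.2 ⟨Finset.mem_univ i, fun h => hzc ((mem_sig X).2 h)⟩)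
  exact this ((mem_sig X).1 hiy)

lemma union_closed (X : Fin n → Set (Euc d)) (hclosed : ∀ i, IsClosed (X i)) :
    IsClosed (⋃ i, X i) := isClosed_iUnion_of_finite hclosed

lemma seg_common (X : Fin n → Set (Euc d)) (hconv : ∀ i, Convex ℝ (X i))
    {u v : Euc d} {j : Fin n} (hu : u ∈ X j) (hv : v ∈ X j) :
    segment ℝ u v ⊆ ⋃ i, X i :=
  fun z hz => mem_iUnion.2 ⟨j, (hconv j).segment_subset hu hv hz⟩

section Code

variable (X : Fin n → Set (Euc d)) (c : Fin k → Finset (Fin n))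

lemma nonempty_c (hrange : Set.range c = {σ | σ ∈ codeOf X ∧ σ ≠ ∅}) (m : Fin k) :
    (c m).Nonempty := by
  have : c m ∈ {σ | σ ∈ codeOf X ∧ σ ≠ ∅} := by rw [← hrange]; exact mem_range_self m
  exact Finset.nonempty_iff_ne_empty.2 this.2

lemma witness (hrange : Set.range c = {σ | σ ∈ codeOf X ∧ σ ≠ ∅}) (m : Fin k) :
    ∃ w, sig X w = c m := by
  have : c m ∈ {σ | σ ∈ codeOf X ∧ σ ≠ ∅} := by rw [← hrange]; exact mem_range_self m
  obtain ⟨w, hw⟩ := this.1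
  exact ⟨w, Finset.ext fun i => (mem_sig X).trans (hw i)⟩

lemma exists_idx (hrange : Set.range c = {σ | σ ∈ codeOf X ∧ σ ≠ ∅}) {z : Euc d}
    (hz : z ∈ ⋃ i, X i) : ∃ m, c m = sig X z := by
  have h1 : sig X z ∈ {σ | σ ∈ codeOf X ∧ σ ≠ ∅} :=
    ⟨sig_mem_code X z, Finset.nonempty_iff_ne_empty.1 ((mem_union_iff X).1 hz)⟩
  rw [← hrange] at h1
  exact h1

lemma adj (honly : ∀ i j : Fin k, c i ⊆ c j → i = j ∨
      ((j : ℕ) = (i : ℕ) + 1 ∧ Even (i : ℕ)) ∨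
      ((i : ℕ) = (j : ℕ) + 1 ∧ ¬ Even (j : ℕ)))
    {u v : Fin k} (h : c u ⊆ c v) : (v : ℕ) ≤ (u : ℕ) + 1 ∧ (u : ℕ) ≤ (v : ℕ) + 1 := by
  rcases honly u v h with rfl | ⟨h1, _⟩ | ⟨h1, _⟩ <;> omega

lemma common (hrange : Set.range c = {σ | σ ∈ codeOf X ∧ σ ≠ ∅})
    (hchain : ∀ i j : Fin k, (j : ℕ) = (i : ℕ) + 1 →
      (Even (i : ℕ) → c i ⊂ c j) ∧ (¬ Even (i : ℕ) → c j ⊂ c i))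
    (htriple : ∀ i j l : Fin k, (j : ℕ) = (i : ℕ) + 1 → (l : ℕ) = (j : ℕ) + 1 →
      (c i ∩ c j ∩ c l).Nonempty)
    {r r' : Fin k} (h1 : (r : ℕ) ≤ (r' : ℕ)) (h2 : (r' : ℕ) ≤ (r : ℕ) + 3) :
    ∃ j, j ∈ c r ∧ j ∈ c r' := by
  have hk' : (r' : ℕ) < k := r'.2
  rcases (by omega : (r' : ℕ) = (r : ℕ) ∨ (r' : ℕ) = (r : ℕ) + 1 ∨ (r' : ℕ) = (r : ℕ) + 2
      ∨ (r' : ℕ) = (r : ℕ) + 3) with h | h | h | h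
  · have heq : r = r' := Fin.ext (by omega)
    obtain ⟨j, hj⟩ := nonempty_c X c hrange r
    exact ⟨j, hj, heq ▸ hj⟩
  · rcases Nat.even_or_odd (r : ℕ) with he | ho
    · obtain ⟨j, hj⟩ := nonempty_c X c hrange r
      exact ⟨j, hj, ((hchain r r' h).1 he).subset hj⟩
    · obtain ⟨j, hj⟩ := nonempty_c X c hrange r'
      exact ⟨j, ((hchain r r' h).2 (Nat.not_even_iff_odd.2 ho)).subset hj, hj⟩
  · have hm1k : (r : ℕ) + 1 < k := by omega
    rcases Nat.even_or_odd (r : ℕ) with he | ho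
    · obtain ⟨j, hj⟩ := htriple r ⟨(r : ℕ) + 1, hm1k⟩ r' rfl (by simp only [Fin.val_mk]; omega)
      rw [Finset.mem_inter, Finset.mem_inter] at hj
      exact ⟨j, hj.1.1, hj.2⟩
    · have hodd : ¬ Even (r : ℕ) := Nat.not_even_iff_odd.2 ho
      have h1' := (hchain r ⟨(r : ℕ) + 1, hm1k⟩ rfl).2 hodd
      have h2' := (hchain ⟨(r : ℕ) + 1, hm1k⟩ r' (by simp only [Fin.val_mk]; omega)).1
        (by simp only [Fin.val_mk]; exact Nat.even_add_one.2 hodd)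
      obtain ⟨j, hj⟩ := nonempty_c X c hrange ⟨(r : ℕ) + 1, hm1k⟩
      exact ⟨j, h1'.subset hj, h2'.subset hj⟩
  · have hm1k : (r : ℕ) + 1 < k := by omega
    have hm2k : (r : ℕ) + 2 < k := by omega
    rcases Nat.even_or_odd (r : ℕ) with he | ho
    · obtain ⟨j, hj⟩ := htriple r ⟨(r : ℕ) + 1, hm1k⟩ ⟨(r : ℕ) + 2, hm2k⟩ rfl rfl
      rw [Finset.mem_inter, Finset.mem_inter] at hj
      have heven2 : Even (((⟨(r : ℕ) + 2, hm2k⟩ : Fin k) : ℕ)) := by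
        simp only [Fin.val_mk]
        rw [Nat.even_iff] at he ⊢
        omega
      have hlast := (hchain ⟨(r : ℕ) + 2, hm2k⟩ r' (by simp only [Fin.val_mk]; omega)).1 heven2
      exact ⟨j, hj.1.1, hlast.subset hj.2⟩
    · have hodd : ¬ Even (r : ℕ) := Nat.not_even_iff_odd.2 ho
      obtain ⟨j, hj⟩ := htriple ⟨(r : ℕ) + 1, hm1k⟩ ⟨(r : ℕ) + 2, hm2k⟩ r' rfl
        (by simp only [Fin.val_mk]; omega)
      rw [Finset.mem_inter, Finset.mem_inter] at hj
      have hfirst := (hchain r ⟨(r : ℕ) + 1, hm1k⟩ rfl).2 hodd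
      exact ⟨j, hfirst.subset hj.1.1, hj.2⟩

end Code


section Geom

variable {E : Type*} [NormedAddCommGroup E] [NormedSpace ℝ E]

lemma lm_comp_left (x y : E) (s t : ℝ) :
    AffineMap.lineMap x (AffineMap.lineMap x y t) s = AffineMap.lineMap x y (s * t) := by
  simp only [AffineMap.lineMap_apply_module]
  module

lemma lm_comp_right (x y : E) (t u : ℝ) :
    AffineMap.lineMap (AffineMap.lineMap x y t) y u = AffineMap.lineMap x y (t + u * (1 - t)) := by
  simp only [AffineMap.lineMap_apply_module]
  module

lemma lineMap_mem_seg01 (x y : E) {θ : ℝ} (h0 : 0 ≤ θ) (h1 : θ ≤ 1) :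
    AffineMap.lineMap x y θ ∈ segment ℝ x y := by
  rw [segment_eq_image_lineMap]
  exact mem_image_of_mem _ ⟨h0, h1⟩

lemma lineMap_mem_segment (x y : E) {θ1 θ θ2 : ℝ} (h1 : θ1 ≤ θ) (h2 : θ ≤ θ2) :
    AffineMap.lineMap x y θ ∈ segment ℝ (AffineMap.lineMap x y θ1) (AffineMap.lineMap x y θ2) := by
  rw [← image_segment ℝ (AffineMap.lineMap x y) θ1 θ2]
  exact mem_image_of_mem _ (by rw [segment_eq_Icc (h1.trans h2)]; exact ⟨h1, h2⟩)

lemma mid_mem {x y z z1 z2 : E} (hz : z ∈ segment ℝ x y)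
    (h1 : z1 ∈ segment ℝ x z) (h2 : z2 ∈ segment ℝ z y) : z ∈ segment ℝ z1 z2 := by
  rw [segment_eq_image_lineMap] at hz
  obtain ⟨t, ht, rfl⟩ := hz
  rw [segment_eq_image_lineMap] at h1 h2
  obtain ⟨s, hs, rfl⟩ := h1
  obtain ⟨u, hu, rfl⟩ := h2
  rw [lm_comp_left, lm_comp_right]
  simp only [mem_Icc] at ht hs hu
  exact lineMap_mem_segment x y (by nlinarith [ht.1, ht.2, hs.1, hs.2])
    (by nlinarith [ht.1, ht.2, hu.1, hu.2])

lemma seg_sub_left {p z : E} {θ : ℝ} (h0 : 0 ≤ θ) (h1 : θ ≤ 1) :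
    segment ℝ p (AffineMap.lineMap p z θ) ⊆ segment ℝ p z := by
  rw [segment_eq_image_lineMap]
  rintro _ ⟨μ, hμ, rfl⟩
  simp only [mem_Icc] at hμ
  rw [lm_comp_left]
  exact lineMap_mem_seg01 p z (by nlinarith [hμ.1, hμ.2]) (by nlinarith [hμ.1, hμ.2])

lemma seg_sub_right {x q : E} {θ : ℝ} (h0 : 0 ≤ θ) (h1 : θ ≤ 1) :
    segment ℝ (AffineMap.lineMap x q θ) q ⊆ segment ℝ x q := by
  rw [segment_eq_image_lineMap]
  rintro _ ⟨μ, hμ, rfl⟩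
  simp only [mem_Icc] at hμ
  rw [lm_comp_right]
  exact lineMap_mem_seg01 x q (by nlinarith [hμ.1, hμ.2]) (by nlinarith [hμ.1, hμ.2])

lemma dist_lineMap_fix (x A B : E) (μ : ℝ) :
    dist (AffineMap.lineMap x A μ) (AffineMap.lineMap x B μ) = |μ| * dist A B := by
  have h : (AffineMap.lineMap x A μ : E) - AffineMap.lineMap x B μ = μ • (A - B) := by
    simp only [AffineMap.lineMap_apply_module]
    module
  rw [dist_eq_norm, h, norm_smul, Real.norm_eq_abs, ← dist_eq_norm]

lemma lineMap_cont (x y : E) : Continuous (fun θ : ℝ => AffineMap.lineMap x y θ) := by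
  simp only [AffineMap.lineMap_apply_module]
  fun_prop

lemma seg_compact (x y : E) : IsCompact (segment ℝ x y) := by
  rw [segment_eq_image_lineMap]
  exact isCompact_Icc.image (lineMap_cont x y)

lemma infDist_lineMap_le {S : Set E} (hS : Convex ℝ S) (hne : S.Nonempty) (hcp : IsCompact S)
    (x y : E) {t : ℝ} (h0 : 0 ≤ t) (h1 : t ≤ 1) :
    Metric.infDist (AffineMap.lineMap x y t) S
      ≤ (1 - t) * Metric.infDist x S + t * Metric.infDist y S := by
  obtain ⟨sx, hsx, hdx⟩ := hcp.exists_infDist_eq_dist hne x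
  obtain ⟨sy, hsy, hdy⟩ := hcp.exists_infDist_eq_dist hne y
  have hm : (AffineMap.lineMap sx sy t : E) ∈ S := by
    rw [AffineMap.lineMap_apply_module]
    exact hS hsx hsy (by linarith) h0 (by ring)
  have hd : dist (AffineMap.lineMap x y t : E) (AffineMap.lineMap sx sy t)
      ≤ (1 - t) * dist x sx + t * dist y sy := by
    have hsub : (AffineMap.lineMap x y t : E) - AffineMap.lineMap sx sy t
        = (1 - t) • (x - sx) + t • (y - sy) := by
      simp only [AffineMap.lineMap_apply_module]
      module
    rw [dist_eq_norm, hsub]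
    refine (norm_add_le _ _).trans ?_
    rw [norm_smul, norm_smul, Real.norm_eq_abs, Real.norm_eq_abs,
      abs_of_nonneg (by linarith), abs_of_nonneg h0, ← dist_eq_norm, ← dist_eq_norm]
  calc Metric.infDist (AffineMap.lineMap x y t : E) S
      ≤ dist (AffineMap.lineMap x y t : E) (AffineMap.lineMap sx sy t) :=
        Metric.infDist_le_dist_of_mem hm
    _ ≤ (1 - t) * dist x sx + t * dist y sy := hd
    _ = (1 - t) * Metric.infDist x S + t * Metric.infDist y S := by rw [hdx, hdy]

end Geom


section Main

variable (X : Fin n → Set (Euc d)) (c : Fin k → Finset (Fin n))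


noncomputable def idxF (hk : 0 < k) (z : Euc d) : Fin k :=
  if h : ∃ m, c m = sig X z then h.choose else ⟨0, hk⟩

lemma idxF_spec (hk : 0 < k) {z : Euc d} (h : ∃ m, c m = sig X z) :
    c (idxF X c hk z) = sig X z := by
  rw [idxF, dif_pos h]
  exact h.choose_spec

lemma seg_limit (hclosed : ∀ i, IsClosed (X i)) {x y v : Euc d} {θ0 : ℝ}
    (h : ∀ ε > 0, ∃ θ, |θ - θ0| < ε ∧ segment ℝ x (AffineMap.lineMap y v θ) ⊆ ⋃ i, X i) :
    segment ℝ x (AffineMap.lineMap y v θ0) ⊆ ⋃ i, X i := by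
  have hU : IsClosed (⋃ i, X i) := union_closed X hclosed
  rw [segment_eq_image_lineMap]
  rintro _ ⟨μ, hμ, rfl⟩
  simp only [mem_Icc] at hμ
  rw [← hU.closure_eq, Metric.mem_closure_iff]
  intro ε hε
  obtain ⟨θ, hθ, hsub⟩ := h (ε / (dist y v + 1)) (by positivity)
  refine ⟨AffineMap.lineMap x (AffineMap.lineMap y v θ) μ,
    hsub (lineMap_mem_seg01 _ _ hμ.1 hμ.2), ?_⟩
  rw [dist_lineMap_fix]
  have hd : dist (AffineMap.lineMap y v θ0 : Euc d) (AffineMap.lineMap y v θ)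
      = |θ0 - θ| * dist y v := dist_lineMap_lineMap y v θ0 θ
  rw [hd]
  have h1 : |θ0 - θ| < ε / (dist y v + 1) := by rwa [abs_sub_comm]
  have h2 : |μ| ≤ 1 := by rw [abs_of_nonneg hμ.1]; exact hμ.2
  have h3 : (0:ℝ) ≤ dist y v := dist_nonneg
  have h4 : 0 < dist y v + 1 := by linarith
  have h5 : |θ0 - θ| * dist y v < ε := by
    calc |θ0 - θ| * dist y v ≤ |θ0 - θ| * (dist y v + 1) := by nlinarith [abs_nonneg (θ0 - θ)]
      _ < (ε / (dist y v + 1)) * (dist y v + 1) := mul_lt_mul_of_pos_right h1 h4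
      _ = ε := by field_simp
  nlinarith [abs_nonneg μ, abs_nonneg (θ0 - θ), mul_nonneg (abs_nonneg (θ0 - θ)) h3]

lemma ivt (hclosed : ∀ i, IsClosed (X i))
    (honly : ∀ i j : Fin k, c i ⊆ c j → i = j ∨
      ((j : ℕ) = (i : ℕ) + 1 ∧ Even (i : ℕ)) ∨
      ((i : ℕ) = (j : ℕ) + 1 ∧ ¬ Even (j : ℕ)))
    (idx : Euc d → Fin k) (hidx : ∀ z, z ∈ (⋃ i, X i) → c (idx z) = sig X z)
    {x y : Euc d} (hseg : segment ℝ x y ⊆ ⋃ i, X i)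
    (t : ℕ) (h1 : (idx x : ℕ) ≤ t) (h2 : t ≤ (idx y : ℕ)) :
    ∃ z ∈ segment ℝ x y, (idx z : ℕ) = t := by
  rcases eq_or_lt_of_le h1 with h1e | h1l
  · exact ⟨x, left_mem_segment ℝ x y, h1e⟩
  rcases eq_or_lt_of_le h2 with h2e | h2l
  · exact ⟨y, right_mem_segment ℝ x y, h2e.symm⟩
  by_contra hcon
  push_neg at hcon
  set γ : ℝ → Euc d := fun θ => AffineMap.lineMap x y θ with hγ
  have hγseg : ∀ θ, 0 ≤ θ → θ ≤ 1 → γ θ ∈ segment ℝ x y :=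
    fun θ a b => lineMap_mem_seg01 x y a b
  have hγU : ∀ θ, 0 ≤ θ → θ ≤ 1 → γ θ ∈ ⋃ i, X i := fun θ a b => hseg (hγseg θ a b)
  have hne : ∀ θ, 0 ≤ θ → θ ≤ 1 → (idx (γ θ) : ℕ) ≠ t := fun θ a b => hcon (γ θ) (hγseg θ a b)
  set A : Set ℝ := {θ | (0 ≤ θ ∧ θ ≤ 1) ∧ (idx (γ θ) : ℕ) < t} with hA
  set B : Set ℝ := {θ | (0 ≤ θ ∧ θ ≤ 1) ∧ t < (idx (γ θ) : ℕ)} with hB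
  have hnear : ∀ θ, 0 ≤ θ → θ ≤ 1 → ∃ δ > 0, ∀ θ', 0 ≤ θ' → θ' ≤ 1 → dist θ θ' < δ →
      ((idx (γ θ) : ℕ) ≤ (idx (γ θ')) + 1 ∧ (idx (γ θ') : ℕ) ≤ (idx (γ θ)) + 1) := by
    intro θ hθ0 hθ1
    obtain ⟨δ, hδ, hloc⟩ := sig_local X hclosed (γ θ)
    refine ⟨δ / (dist x y + 1), by positivity, fun θ' h0' h1' hdd => ?_⟩
    have hdist : dist (γ θ') (γ θ) < δ := by
      have heq : dist (γ θ') (γ θ) = |θ' - θ| * dist x y := dist_lineMap_lineMap x y θ' θ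
      rw [heq]
      rw [Real.dist_eq] at hdd
      have habs : |θ' - θ| < δ / (dist x y + 1) := by rwa [abs_sub_comm]
      have h3 : (0:ℝ) ≤ dist x y := dist_nonneg
      have h4 : (0:ℝ) < dist x y + 1 := by linarith
      calc |θ' - θ| * dist x y ≤ |θ' - θ| * (dist x y + 1) := by
            nlinarith [abs_nonneg (θ' - θ)]
        _ < (δ / (dist x y + 1)) * (dist x y + 1) := by
            exact mul_lt_mul_of_pos_right habs h4
        _ = δ := by field_simp
    have hsub : sig X (γ θ') ⊆ sig X (γ θ) := hloc _ hdist
    have hcc : c (idx (γ θ')) ⊆ c (idx (γ θ)) := by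
      rw [hidx _ (hγU θ' h0' h1'), hidx _ (hγU θ hθ0 hθ1)]
      exact hsub
    exact adj c honly hcc
  have hclA : ∀ θ, θ ∈ closure A → 0 ≤ θ → θ ≤ 1 → θ ∈ A := by
    intro θ hcl hθ0 hθ1
    obtain ⟨δ, hδ, hloc⟩ := hnear θ hθ0 hθ1
    obtain ⟨θ', hθ'A, hdd⟩ := Metric.mem_closure_iff.1 hcl δ hδ
    have hadj := hloc θ' hθ'A.1.1 hθ'A.1.2 hdd
    have h5 := hθ'A.2
    have h6 := hne θ hθ0 hθ1
    exact ⟨⟨hθ0, hθ1⟩, by omega⟩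
  have hclB : ∀ θ, θ ∈ closure B → 0 ≤ θ → θ ≤ 1 → θ ∈ B := by
    intro θ hcl hθ0 hθ1
    obtain ⟨δ, hδ, hloc⟩ := hnear θ hθ0 hθ1
    obtain ⟨θ', hθ'B, hdd⟩ := Metric.mem_closure_iff.1 hcl δ hδ
    have hadj := hloc θ' hθ'B.1.1 hθ'B.1.2 hdd
    have h5 := hθ'B.2
    have h6 := hne θ hθ0 hθ1
    exact ⟨⟨hθ0, hθ1⟩, by omega⟩
  have hcover : Icc (0:ℝ) 1 ⊆ closure A ∪ closure B := by
    intro θ hθ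
    rcases (hne θ hθ.1 hθ.2).lt_or_gt with h | h
    · exact Or.inl (subset_closure ⟨⟨hθ.1, hθ.2⟩, h⟩)
    · exact Or.inr (subset_closure ⟨⟨hθ.1, hθ.2⟩, h⟩)
  have h0A : ((Icc (0:ℝ) 1) ∩ closure A).Nonempty := by
    refine ⟨0, ⟨le_refl 0, zero_le_one⟩, subset_closure ⟨⟨le_refl 0, zero_le_one⟩, ?_⟩⟩
    have hγ0 : γ 0 = x := by simp [hγ]
    rw [hγ0]
    exact h1l
  have h1B : ((Icc (0:ℝ) 1) ∩ closure B).Nonempty := by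
    refine ⟨1, ⟨zero_le_one, le_refl 1⟩, subset_closure ⟨⟨zero_le_one, le_refl 1⟩, ?_⟩⟩
    have hγ1 : γ 1 = y := by simp [hγ]
    rw [hγ1]
    exact h2l
  obtain ⟨θ, hθIcc, hθA, hθB⟩ := (isPreconnected_closed_iff.1 isPreconnected_Icc)
    (closure A) (closure B) isClosed_closure isClosed_closure hcover h0A h1B
  have hA' := hclA θ hθA hθIcc.1 hθIcc.2
  have hB' := hclB θ hθB hθIcc.1 hθIcc.2
  have h7 := hA'.2
  have h8 := hB'.2
  omega

lemma window (hconv : ∀ i, Convex ℝ (X i)) (hclosed : ∀ i, IsClosed (X i))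
    (honly : ∀ i j : Fin k, c i ⊆ c j → i = j ∨
      ((j : ℕ) = (i : ℕ) + 1 ∧ Even (i : ℕ)) ∨
      ((i : ℕ) = (j : ℕ) + 1 ∧ ¬ Even (j : ℕ)))
    (idx : Euc d → Fin k) (hidx : ∀ z, z ∈ (⋃ i, X i) → c (idx z) = sig X z)
    {x y z : Euc d} (hseg : segment ℝ x y ⊆ ⋃ i, X i)
    (hord : (idx x : ℕ) ≤ (idx y : ℕ)) (hz : z ∈ segment ℝ x y) :
    (idx x : ℕ) ≤ (idx z : ℕ) + 1 ∧ (idx z : ℕ) ≤ (idx y : ℕ) + 1 := by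
  have hxz : segment ℝ x z ⊆ segment ℝ x y :=
    (convex_segment x y).segment_subset (left_mem_segment ℝ x y) hz
  have hzy : segment ℝ z y ⊆ segment ℝ x y :=
    (convex_segment x y).segment_subset hz (right_mem_segment ℝ x y)
  have hxzU : segment ℝ x z ⊆ ⋃ i, X i := hxz.trans hseg
  have hzyU : segment ℝ z y ⊆ ⋃ i, X i := hzy.trans hseg
  have hzxU : segment ℝ z x ⊆ ⋃ i, X i := by rw [segment_symm]; exact hxzU
  have hyzU : segment ℝ y z ⊆ ⋃ i, X i := by rw [segment_symm]; exact hzyU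
  have hzU : z ∈ ⋃ i, X i := hseg hz
  constructor
  · by_contra hcon
    push_neg at hcon
    obtain ⟨z1, hz1seg, hz1⟩ := ivt X c hclosed honly idx hidx hzxU ((idx x : ℕ))
      (by omega) (le_refl _)
    obtain ⟨z2, hz2seg, hz2⟩ := ivt X c hclosed honly idx hidx hzyU ((idx x : ℕ))
      (by omega) hord
    have hz1' : z1 ∈ segment ℝ x z := by rwa [segment_symm] at hz1seg
    have hmid := mid_mem hz hz1' hz2seg
    have hsub := sig_mid X hconv hmid
    have e12 : idx z1 = idx z2 := Fin.ext (by omega)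
    have hs1 : c (idx z1) = sig X z1 := hidx _ (hzxU hz1seg)
    have hs2 : c (idx z2) = sig X z2 := hidx _ (hzyU hz2seg)
    have hss : sig X z2 = sig X z1 := by rw [← hs2, ← hs1, e12]
    rw [hss, Finset.inter_self] at hsub
    have hcc : c (idx z1) ⊆ c (idx z) := by
      rw [hs1, hidx _ hzU]
      exact hsub
    have hadj := adj c honly hcc
    omega
  · by_contra hcon
    push_neg at hcon
    obtain ⟨z1, hz1seg, hz1⟩ := ivt X c hclosed honly idx hidx hxzU ((idx y : ℕ))
      hord (by omega)
    obtain ⟨z2, hz2seg, hz2⟩ := ivt X c hclosed honly idx hidx hyzU ((idx y : ℕ))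
      (le_refl _) (by omega)
    have hz2' : z2 ∈ segment ℝ z y := by rwa [segment_symm] at hz2seg
    have hmid := mid_mem hz hz1seg hz2'
    have hsub := sig_mid X hconv hmid
    have e12 : idx z1 = idx z2 := Fin.ext (by omega)
    have hs1 : c (idx z1) = sig X z1 := hidx _ (hxzU hz1seg)
    have hs2 : c (idx z2) = sig X z2 := hidx _ (hyzU hz2seg)
    have hss : sig X z2 = sig X z1 := by rw [← hs2, ← hs1, e12]
    rw [hss, Finset.inter_self] at hsub
    have hcc : c (idx z1) ⊆ c (idx z) := by
      rw [hs1, hidx _ hzU]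
      exact hsub
    have hadj := adj c honly hcc
    omega

end Main

end RigidAux

set_option maxHeartbeats 2000000 in
/-- Rigid structures: if the nonempty codewords of the code of a closed convex realization
`X` can be enumerated `c_0, …, c_{k-1}` with alternating strict containments
`c_0 ⊂ c_1 ⊃ c_2 ⊂ c_3 ⊃ ⋯`, no other containments among distinct nonempty codewords,
and every three consecutive codewords having nonempty intersection, then `⋃ i, X i`
is convex. -/
theorem rigid_structure_union_convex {n d k : ℕ} (X : Fin n → Set (Euc d))
    (hconv : ∀ i, Convex ℝ (X i)) (hclosed : ∀ i, IsClosed (X i))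
    (c : Fin k → Finset (Fin n))
    (hinj : Function.Injective c)
    (hrange : Set.range c = {σ | σ ∈ codeOf X ∧ σ ≠ ∅})
    (hchain : ∀ i j : Fin k, (j : ℕ) = (i : ℕ) + 1 →
      (Even (i : ℕ) → c i ⊂ c j) ∧ (¬ Even (i : ℕ) → c j ⊂ c i))
    (honly : ∀ i j : Fin k, c i ⊆ c j → i = j ∨
      ((j : ℕ) = (i : ℕ) + 1 ∧ Even (i : ℕ)) ∨
      ((i : ℕ) = (j : ℕ) + 1 ∧ ¬ Even (j : ℕ)))
    (htriple : ∀ i j l : Fin k, (j : ℕ) = (i : ℕ) + 1 → (l : ℕ) = (j : ℕ) + 1 →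
      (c i ∩ c j ∩ c l).Nonempty) :
    Convex ℝ (⋃ i, X i) := by
  classical
  rcases Nat.eq_zero_or_pos k with hk0 | hk
  · have hempty : (⋃ i, X i) = ∅ := by
      ext z
      simp only [Set.mem_empty_iff_false, iff_false]
      intro hz
      obtain ⟨m, hm⟩ := RigidAux.exists_idx X c hrange hz
      exact absurd m.2 (by omega)
    rw [hempty]
    exact convex_empty
  set idx : Euc d → Fin k := RigidAux.idxF X c hk with hidxeq
  have hidx : ∀ z, z ∈ (⋃ i, X i) → c (idx z) = RigidAux.sig X z := fun z hz => by
    rw [hidxeq]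
    exact RigidAux.idxF_spec X c hk (RigidAux.exists_idx X c hrange hz)
  -- base: index distance at most 3
  have base : ∀ u v : Euc d, u ∈ (⋃ i, X i) → v ∈ (⋃ i, X i) →
      (idx u : ℕ) ≤ (idx v : ℕ) + 3 → (idx v : ℕ) ≤ (idx u : ℕ) + 3 →
      segment ℝ u v ⊆ ⋃ i, X i := by
    intro u v hu hv hle1 hle2
    rcases le_total ((idx u : ℕ)) ((idx v : ℕ)) with h | h
    · obtain ⟨j, hj1, hj2⟩ := RigidAux.common X c hrange hchain htriple h (by omega)
      have hu' : u ∈ X j := (RigidAux.mem_sig X).1 (by rw [← hidx u hu]; exact hj1)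
      have hv' : v ∈ X j := (RigidAux.mem_sig X).1 (by rw [← hidx v hv]; exact hj2)
      exact RigidAux.seg_common X hconv hu' hv'
    · obtain ⟨j, hj1, hj2⟩ := RigidAux.common X c hrange hchain htriple h (by omega)
      have hu' : u ∈ X j := (RigidAux.mem_sig X).1 (by rw [← hidx u hu]; exact hj2)
      have hv' : v ∈ X j := (RigidAux.mem_sig X).1 (by rw [← hidx v hv]; exact hj1)
      exact RigidAux.seg_common X hconv hu' hv'
  have key : ∀ Δ : ℕ, ∀ p q : Euc d, p ∈ (⋃ i, X i) → q ∈ (⋃ i, X i) →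
      (idx q : ℕ) = (idx p : ℕ) + Δ → segment ℝ p q ⊆ ⋃ i, X i := by
    intro Δ
    induction Δ using Nat.strong_induction_on with
    | _ Δ IH =>
    intro p q hp hq hΔ
    by_cases hsmall : Δ ≤ 3
    · exact base p q hp hq (by omega) (by omega)
    push_neg at hsmall
    have hΔ4 : 4 ≤ Δ := hsmall
    have IH2 : ∀ u v : Euc d, u ∈ (⋃ i, X i) → v ∈ (⋃ i, X i) →
        (idx u : ℕ) ≤ (idx v : ℕ) + (Δ - 1) → (idx v : ℕ) ≤ (idx u : ℕ) + (Δ - 1) →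
        segment ℝ u v ⊆ ⋃ i, X i := by
      intro u v hu hv h1 h2
      rcases le_total ((idx u : ℕ)) ((idx v : ℕ)) with h | h
      · exact IH ((idx v : ℕ) - (idx u : ℕ)) (by omega) u v hu hv (by omega)
      · rw [segment_symm]
        exact IH ((idx u : ℕ) - (idx v : ℕ)) (by omega) v u hv hu (by omega)
    have hbk : (idx q : ℕ) < k := (idx q).2
    have hB1k : (idx q : ℕ) - 1 < k := by omega
    obtain ⟨y0, hy0⟩ := RigidAux.witness X c hrange ⟨(idx q : ℕ) - 1, hB1k⟩
    have hy0U : y0 ∈ ⋃ i, X i := (RigidAux.mem_union_iff X).2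
      (by rw [hy0]; exact RigidAux.nonempty_c X c hrange _)
    have hidxy0 : idx y0 = ⟨(idx q : ℕ) - 1, hB1k⟩ := hinj (by rw [hidx y0 hy0U]; exact hy0)
    have hidxy0' : (idx y0 : ℕ) = (idx q : ℕ) - 1 := by rw [hidxy0]
    have hqy0 : segment ℝ q y0 ⊆ ⋃ i, X i := base q y0 hq hy0U (by omega) (by omega)
    have hpy0 : segment ℝ p y0 ⊆ ⋃ i, X i := IH2 p y0 hp hy0U (by omega) (by omega)
    have hSconv : Convex ℝ (segment ℝ p q) := convex_segment p q
    have hSne : (segment ℝ p q).Nonempty := ⟨p, left_mem_segment ℝ p q⟩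
    have hScp : IsCompact (segment ℝ p q) := RigidAux.seg_compact p q
    have hSclosed : IsClosed (segment ℝ p q) := hScp.isClosed
    have hpB : p ∈ Metric.closedBall (0 : Euc d) (max (max ‖p‖ ‖q‖) ‖y0‖) := by
      rw [mem_closedBall_zero_iff]
      exact le_max_of_le_left (le_max_left _ _)
    have hqB : q ∈ Metric.closedBall (0 : Euc d) (max (max ‖p‖ ‖q‖) ‖y0‖) := by
      rw [mem_closedBall_zero_iff]
      exact le_max_of_le_left (le_max_right _ _)
    have hy0B : y0 ∈ Metric.closedBall (0 : Euc d) (max (max ‖p‖ ‖q‖) ‖y0‖) := by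
      rw [mem_closedBall_zero_iff]
      exact le_max_right _ _
    have hBconv : Convex ℝ (Metric.closedBall (0 : Euc d) (max (max ‖p‖ ‖q‖) ‖y0‖)) :=
      convex_closedBall _ _
    set Z : Set (Euc d) := {z | z ∈ Metric.closedBall (0 : Euc d) (max (max ‖p‖ ‖q‖) ‖y0‖) ∧
        segment ℝ p z ⊆ (⋃ i, X i) ∧ segment ℝ q z ⊆ (⋃ i, X i) ∧
        ∃ b' : Fin k, (idx q : ℕ) ≤ (b' : ℕ) + 1 ∧ (b' : ℕ) ≤ (idx q : ℕ) + 1 ∧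
          c b' ⊆ RigidAux.sig X z} with hZ
    have hcl1 : ∀ w : Euc d, IsClosed {z : Euc d | segment ℝ w z ⊆ ⋃ i, X i} := by
      intro w
      have heq : {z : Euc d | segment ℝ w z ⊆ ⋃ i, X i}
          = ⋂ θ ∈ Set.Icc (0:ℝ) 1, {z : Euc d | AffineMap.lineMap w z θ ∈ ⋃ i, X i} := by
        ext z
        simp only [Set.mem_setOf_eq, Set.mem_iInter]
        constructor
        · intro h θ hθ
          exact h (RigidAux.lineMap_mem_seg01 w z hθ.1 hθ.2)
        · intro h u hu
          rw [segment_eq_image_lineMap] at hu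
          obtain ⟨θ, hθ, rfl⟩ := hu
          exact h θ hθ
      rw [heq]
      refine isClosed_biInter fun θ _ => ?_
      have hcont : Continuous (fun z : Euc d => AffineMap.lineMap w z θ) := by
        simp only [AffineMap.lineMap_apply_module]
        fun_prop
      exact IsClosed.preimage hcont (RigidAux.union_closed X hclosed)
    have hcl3 : IsClosed {z : Euc d | ∃ b' : Fin k, (idx q : ℕ) ≤ (b' : ℕ) + 1 ∧
        (b' : ℕ) ≤ (idx q : ℕ) + 1 ∧ c b' ⊆ RigidAux.sig X z} := by
      have heq : {z : Euc d | ∃ b' : Fin k, (idx q : ℕ) ≤ (b' : ℕ) + 1 ∧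
          (b' : ℕ) ≤ (idx q : ℕ) + 1 ∧ c b' ⊆ RigidAux.sig X z}
          = ⋃ b' ∈ {b' : Fin k | (idx q : ℕ) ≤ (b' : ℕ) + 1 ∧ (b' : ℕ) ≤ (idx q : ℕ) + 1},
            ⋂ j ∈ c b', X j := by
        ext z
        simp only [Set.mem_setOf_eq, Set.mem_iUnion, Set.mem_iInter, exists_prop]
        constructor
        · rintro ⟨b', h1, h2, h3⟩
          exact ⟨b', ⟨h1, h2⟩, fun j hj => (RigidAux.mem_sig X).1 (h3 hj)⟩
        · rintro ⟨b', ⟨h1, h2⟩, h3⟩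
          exact ⟨b', h1, h2, fun j hj => (RigidAux.mem_sig X).2 (h3 j hj)⟩
      rw [heq]
      refine Set.Finite.isClosed_biUnion (Set.toFinite _) fun b' _ => ?_
      exact isClosed_biInter fun j _ => hclosed j
    have hZclosed : IsClosed Z := by
      have hZeq : Z = Metric.closedBall (0 : Euc d) (max (max ‖p‖ ‖q‖) ‖y0‖) ∩
          ({z : Euc d | segment ℝ p z ⊆ ⋃ i, X i} ∩
          ({z : Euc d | segment ℝ q z ⊆ ⋃ i, X i} ∩
          {z : Euc d | ∃ b' : Fin k, (idx q : ℕ) ≤ (b' : ℕ) + 1 ∧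
            (b' : ℕ) ≤ (idx q : ℕ) + 1 ∧ c b' ⊆ RigidAux.sig X z})) := by
        rw [hZ]
        ext z
        simp only [Set.mem_setOf_eq, Set.mem_inter_iff]
      rw [hZeq]
      exact Metric.isClosed_closedBall.inter ((hcl1 p).inter ((hcl1 q).inter hcl3))
    have hZcp : IsCompact Z :=
      (isCompact_closedBall _ _).of_isClosed_subset hZclosed (fun z hz => hz.1)
    have hy0Z : y0 ∈ Z := by
      rw [hZ]
      exact ⟨hy0B, hpy0, hqy0, ⟨(idx q : ℕ) - 1, hB1k⟩, by simp only [Fin.val_mk]; omega, by simp only [Fin.val_mk]; omega,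
        by rw [hy0]⟩
    obtain ⟨zs, hzsZ, hzsmin⟩ := hZcp.exists_isMinOn ⟨y0, hy0Z⟩
      ((Metric.continuous_infDist_pt (segment ℝ p q)).continuousOn)
    rw [hZ] at hzsZ
    obtain ⟨hzsB, hpzs, hqzs, b', hb'1, hb'2, hb'sub⟩ := hzsZ
    have hzsU : zs ∈ ⋃ i, X i := hpzs (right_mem_segment ℝ p zs)
    have hm1 : (idx q : ℕ) ≤ (idx zs : ℕ) + 2 ∧ (idx zs : ℕ) ≤ (idx q : ℕ) + 2 := by
      have hcc : c b' ⊆ c (idx zs) := by rw [hidx zs hzsU]; exact hb'sub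
      have := RigidAux.adj c honly hcc
      omega
    obtain ⟨hm1a, hm1b⟩ := hm1
    by_cases hf0 : Metric.infDist zs (segment ℝ p q) = 0
    · have hzsS : zs ∈ segment ℝ p q := (hSclosed.mem_iff_infDist_zero hSne).2 hf0
      intro w hw
      rw [segment_eq_image_lineMap] at hzsS hw
      obtain ⟨θs, hθs, hzseq⟩ := hzsS
      obtain ⟨θ, hθ, rfl⟩ := hw
      simp only [Set.mem_Icc] at hθs hθ
      rcases le_total θ θs with hle | hle
      · have hmem := RigidAux.lineMap_mem_segment p q (θ1 := 0) (θ2 := θs) hθ.1 hle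
        rw [AffineMap.lineMap_apply_zero, hzseq] at hmem
        exact hpzs hmem
      · have hmem := RigidAux.lineMap_mem_segment p q (θ1 := θs) (θ2 := 1) hle hθ.2
        rw [AffineMap.lineMap_apply_one, hzseq] at hmem
        rw [segment_symm] at hmem
        exact hqzs hmem
    · have hε : 0 < Metric.infDist zs (segment ℝ p q) :=
        lt_of_le_of_ne Metric.infDist_nonneg (Ne.symm hf0)
      have hordp : (idx p : ℕ) ≤ (idx zs : ℕ) := by omega
      have hwin1 : ∀ θ : ℝ, 0 ≤ θ → θ ≤ 1 →
          (idx p : ℕ) ≤ (idx (AffineMap.lineMap p zs θ) : ℕ) + 1 ∧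
          (idx (AffineMap.lineMap p zs θ) : ℕ) ≤ (idx zs : ℕ) + 1 :=
        fun θ a b => RigidAux.window X c hconv hclosed honly idx hidx hpzs hordp
          (RigidAux.lineMap_mem_seg01 p zs a b)
      have hγ1U : ∀ θ : ℝ, 0 ≤ θ → θ ≤ 1 → AffineMap.lineMap p zs θ ∈ ⋃ i, X i :=
        fun θ a b => hpzs (RigidAux.lineMap_mem_seg01 p zs a b)
      have hGC1 : ∀ θ : ℝ, 0 ≤ θ → θ ≤ 1 → (idx p : ℕ) + 1 ≤ (idx (AffineMap.lineMap p zs θ) : ℕ) →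
          segment ℝ q (AffineMap.lineMap p zs θ) ⊆ ⋃ i, X i := by
        intro θ a b hge
        obtain ⟨hw1, hw2⟩ := hwin1 θ a b
        exact IH2 q _ hq (hγ1U θ a b) (by omega) (by omega)
      obtain ⟨δ1, hδ1, hloc1⟩ := RigidAux.sig_local X hclosed zs
      have hη1pos : 0 < δ1 / (dist p zs + 1) := by positivity
      have hnear1 : ∀ θ : ℝ, 0 ≤ θ → θ ≤ 1 → 1 - δ1 / (dist p zs + 1) < θ →
          (idx p : ℕ) + 1 ≤ (idx (AffineMap.lineMap p zs θ) : ℕ) := by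
        intro θ a b hgt
        have hdist : dist (AffineMap.lineMap p zs θ) zs < δ1 := by
          have heq : dist (AffineMap.lineMap p zs θ) (AffineMap.lineMap p zs (1:ℝ))
              = |θ - 1| * dist p zs := dist_lineMap_lineMap p zs θ 1
          rw [AffineMap.lineMap_apply_one] at heq
          rw [heq]
          have habs : |θ - 1| < δ1 / (dist p zs + 1) := by
            rw [abs_sub_comm, abs_of_nonneg (by linarith)]
            linarith
          have h3 : (0:ℝ) ≤ dist p zs := dist_nonneg
          calc |θ - 1| * dist p zs ≤ |θ - 1| * (dist p zs + 1) := by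
                nlinarith [abs_nonneg (θ - 1)]
            _ < (δ1 / (dist p zs + 1)) * (dist p zs + 1) :=
                mul_lt_mul_of_pos_right habs (by linarith)
            _ = δ1 := by field_simp
        have hsub := hloc1 _ hdist
        have hcc : c (idx (AffineMap.lineMap p zs θ)) ⊆ c (idx zs) := by
          rw [hidx _ (hγ1U θ a b), hidx _ hzsU]
          exact hsub
        have := RigidAux.adj c honly hcc
        omega
      set T : Set ℝ := {θ : ℝ | (0 ≤ θ ∧ θ ≤ 1) ∧ ∀ θ', θ ≤ θ' → θ' ≤ 1 →
          segment ℝ q (AffineMap.lineMap p zs θ') ⊆ ⋃ i, X i} with hT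
      have hθδT : max 0 (1 - δ1 / (dist p zs + 1) / 2) ∈ T := by
        rw [hT]
        refine ⟨⟨le_max_left _ _, max_le (by linarith) (by linarith)⟩, fun θ' h1' h2' => ?_⟩
        have h0' : 0 ≤ θ' := le_trans (le_max_left _ _) h1'
        have hge : 1 - δ1 / (dist p zs + 1) / 2 ≤ θ' := le_trans (le_max_right _ _) h1'
        exact hGC1 θ' h0' h2' (hnear1 θ' h0' h2' (by linarith))
      have hTbdd : BddBelow T := ⟨0, fun θ hθ => by rw [hT] at hθ; exact hθ.1.1⟩
      have hTne : T.Nonempty := ⟨_, hθδT⟩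
      have htI0 : 0 ≤ sInf T := le_csInf hTne fun θ hθ => by rw [hT] at hθ; exact hθ.1.1
      have htIlt1 : sInf T < 1 := by
        have h1 := csInf_le hTbdd hθδT
        have h2 : max 0 (1 - δ1 / (dist p zs + 1) / 2) < 1 :=
          max_lt one_pos (by linarith)
        linarith
      have hgood1 : ∀ θ, sInf T < θ → θ ≤ 1 →
          segment ℝ q (AffineMap.lineMap p zs θ) ⊆ ⋃ i, X i := by
        intro θ hθ h1'
        obtain ⟨θ'', hθ''T, hlt⟩ := (csInf_lt_iff hTbdd hTne).1 hθ
        rw [hT] at hθ''T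
        exact hθ''T.2 θ (le_of_lt hlt) h1'
      have hqxI : segment ℝ q (AffineMap.lineMap p zs (sInf T)) ⊆ ⋃ i, X i := by
        apply RigidAux.seg_limit X hclosed
        intro ε hε'
        refine ⟨min (sInf T + ε/2) ((sInf T + 1)/2), ?_, ?_⟩
        · have h1 : sInf T < min (sInf T + ε/2) ((sInf T + 1)/2) :=
            lt_min (by linarith) (by linarith)
          have h2 : min (sInf T + ε/2) ((sInf T + 1)/2) ≤ sInf T + ε/2 := min_le_left _ _
          rw [abs_of_nonneg (by linarith)]
          linarith
        · exact hgood1 _ (lt_min (by linarith) (by linarith))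
            (by have := min_le_right (sInf T + ε/2) ((sInf T + 1)/2); linarith)
      rcases eq_or_lt_of_le htI0 with htIzero | htIpos
      · have h0 : AffineMap.lineMap p zs (sInf T) = p := by rw [← htIzero]; simp
        rw [segment_symm]
        exact h0 ▸ hqxI
      · have hxsU : AffineMap.lineMap p zs (sInf T) ∈ ⋃ i, X i := hγ1U _ htI0 htIlt1.le
        have hpxs : segment ℝ p (AffineMap.lineMap p zs (sInf T)) ⊆ ⋃ i, X i :=
          (RigidAux.seg_sub_left htI0 htIlt1.le).trans hpzs
        have hxsq : segment ℝ (AffineMap.lineMap p zs (sInf T)) q ⊆ ⋃ i, X i := by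
          rw [segment_symm]
          exact hqxI
        obtain ⟨hwxs1, hwxs2⟩ := hwin1 (sInf T) htI0 htIlt1.le
        have haxs : (idx (AffineMap.lineMap p zs (sInf T)) : ℕ) ≤ (idx p : ℕ) + 1 := by
          by_contra hcon
          push_neg at hcon
          obtain ⟨δ2, hδ2, hloc2⟩ := RigidAux.sig_local X hclosed
            (AffineMap.lineMap p zs (sInf T))
          have hη2pos : 0 < δ2 / (dist p zs + 1) := by positivity
          have hmemT : max 0 (sInf T - δ2 / (dist p zs + 1) / 2) ∈ T := by
            rw [hT]
            refine ⟨⟨le_max_left _ _, max_le (by linarith) (by linarith)⟩,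
              fun θ' h1' h2' => ?_⟩
            have h0' : 0 ≤ θ' := le_trans (le_max_left _ _) h1'
            rcases lt_or_ge (sInf T) θ' with hgt | hle
            · exact hgood1 θ' hgt h2'
            · have hger : sInf T - δ2 / (dist p zs + 1) / 2 ≤ θ' :=
                le_trans (le_max_right _ _) h1'
              have hdist : dist (AffineMap.lineMap p zs θ')
                  (AffineMap.lineMap p zs (sInf T)) < δ2 := by
                rw [dist_lineMap_lineMap]
                have habs : |θ' - sInf T| ≤ δ2 / (dist p zs + 1) / 2 :=
                  abs_le.2 ⟨by linarith, by linarith⟩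
                have h3 : (0:ℝ) ≤ dist p zs := dist_nonneg
                calc |θ' - sInf T| * dist p zs
                    ≤ (δ2 / (dist p zs + 1) / 2) * (dist p zs + 1) := by
                      nlinarith [abs_nonneg (θ' - sInf T)]
                  _ < (δ2 / (dist p zs + 1)) * (dist p zs + 1) := by
                      apply mul_lt_mul_of_pos_right _ (by linarith)
                      linarith
                  _ = δ2 := by field_simp
              have hsub := hloc2 _ hdist
              have hcc : c (idx (AffineMap.lineMap p zs θ')) ⊆
                  c (idx (AffineMap.lineMap p zs (sInf T))) := by
                rw [hidx _ (hγ1U θ' h0' h2'), hidx _ hxsU]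
                exact hsub
              have hadj := RigidAux.adj c honly hcc
              exact hGC1 θ' h0' h2' (by omega)
          have hle2 := csInf_le hTbdd hmemT
          have hmax : max 0 (sInf T - δ2 / (dist p zs + 1) / 2) < sInf T :=
            max_lt htIpos (by linarith)
          linarith
        -- FAN 2: sweep from p along the segment from x* to q
        have hordxq : (idx (AffineMap.lineMap p zs (sInf T)) : ℕ) ≤ (idx q : ℕ) := by omega
        have hwin2 : ∀ θ : ℝ, 0 ≤ θ → θ ≤ 1 →
            (idx (AffineMap.lineMap p zs (sInf T)) : ℕ) ≤
              (idx (AffineMap.lineMap (AffineMap.lineMap p zs (sInf T)) q θ) : ℕ) + 1 ∧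
            (idx (AffineMap.lineMap (AffineMap.lineMap p zs (sInf T)) q θ) : ℕ) ≤
              (idx q : ℕ) + 1 :=
          fun θ a b => RigidAux.window X c hconv hclosed honly idx hidx hxsq hordxq
            (RigidAux.lineMap_mem_seg01 _ q a b)
        have hγ2U : ∀ θ : ℝ, 0 ≤ θ → θ ≤ 1 →
            AffineMap.lineMap (AffineMap.lineMap p zs (sInf T)) q θ ∈ ⋃ i, X i :=
          fun θ a b => hxsq (RigidAux.lineMap_mem_seg01 _ q a b)
        have hGC2 : ∀ θ : ℝ, 0 ≤ θ → θ ≤ 1 →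
            (idx (AffineMap.lineMap (AffineMap.lineMap p zs (sInf T)) q θ) : ℕ) + 1 ≤
              (idx q : ℕ) →
            segment ℝ p (AffineMap.lineMap (AffineMap.lineMap p zs (sInf T)) q θ) ⊆
              ⋃ i, X i := by
          intro θ a b hle
          obtain ⟨hw1, hw2⟩ := hwin2 θ a b
          exact IH2 p _ hp (hγ2U θ a b) (by omega) (by omega)
        set T2 : Set ℝ := {θ : ℝ | (0 ≤ θ ∧ θ ≤ 1) ∧ ∀ θ', 0 ≤ θ' → θ' ≤ θ →
            segment ℝ p (AffineMap.lineMap (AffineMap.lineMap p zs (sInf T)) q θ') ⊆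
              ⋃ i, X i} with hT2
        have h0T2 : (0:ℝ) ∈ T2 := by
          rw [hT2]
          refine ⟨⟨le_refl 0, zero_le_one⟩, fun θ' h0' hle' => ?_⟩
          have hz0 : θ' = 0 := le_antisymm hle' h0'
          subst hz0
          have h00 : AffineMap.lineMap (AffineMap.lineMap p zs (sInf T)) q (0:ℝ)
              = AffineMap.lineMap p zs (sInf T) := by simp
          rw [h00]
          exact hpxs
        have hbdd2 : BddAbove T2 := ⟨1, fun θ hθ => by rw [hT2] at hθ; exact hθ.1.2⟩
        have hT2ne : T2.Nonempty := ⟨0, h0T2⟩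
        have hsI0 : 0 ≤ sSup T2 := le_csSup hbdd2 h0T2
        have hsI1 : sSup T2 ≤ 1 := csSup_le hT2ne fun θ hθ => by rw [hT2] at hθ; exact hθ.1.2
        have hgood2 : ∀ θ' : ℝ, 0 ≤ θ' → θ' < sSup T2 →
            segment ℝ p (AffineMap.lineMap (AffineMap.lineMap p zs (sInf T)) q θ') ⊆
              ⋃ i, X i := by
          intro θ' h0' hlt
          obtain ⟨θ'', hθ''T2, hgt⟩ := (lt_csSup_iff hbdd2 hT2ne).1 hlt
          rw [hT2] at hθ''T2
          exact hθ''T2.2 θ' h0' (le_of_lt hgt)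
        have hpsI : segment ℝ p
            (AffineMap.lineMap (AffineMap.lineMap p zs (sInf T)) q (sSup T2)) ⊆ ⋃ i, X i := by
          rcases eq_or_lt_of_le hsI0 with hzero | hposI
          · have h00 : AffineMap.lineMap (AffineMap.lineMap p zs (sInf T)) q (sSup T2)
                = AffineMap.lineMap p zs (sInf T) := by rw [← hzero]; simp
            rw [h00]
            exact hpxs
          · apply RigidAux.seg_limit X hclosed
            intro ε hε'
            have hm : 0 < min ε (sSup T2) := lt_min hε' hposI
            have hminε : min ε (sSup T2) ≤ ε := min_le_left _ _
            have hminS : min ε (sSup T2) ≤ sSup T2 := min_le_right _ _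
            refine ⟨max 0 (sSup T2 - (min ε (sSup T2))/2), ?_, ?_⟩
            · have hge : sSup T2 - (min ε (sSup T2))/2 ≤ max 0 (sSup T2 - (min ε (sSup T2))/2) :=
                le_max_right _ _
              have hlt2 : max 0 (sSup T2 - (min ε (sSup T2))/2) < sSup T2 :=
                max_lt hposI (by linarith)
              rw [abs_lt]
              constructor <;> nlinarith
            · exact hgood2 _ (le_max_left _ _) (max_lt hposI (by linarith))
        have hsIT2 : sSup T2 ∈ T2 := by
          rw [hT2]
          refine ⟨⟨hsI0, hsI1⟩, fun θ' h0' hle' => ?_⟩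
          rcases eq_or_lt_of_le hle' with heq | hlt
          · rw [heq]
            exact hpsI
          · exact hgood2 θ' h0' hlt
        rcases eq_or_lt_of_le hsI1 with hsIone | hsIlt
        · have h11 : AffineMap.lineMap (AffineMap.lineMap p zs (sInf T)) q (sSup T2) = q := by
            rw [hsIone]; simp
          rw [h11] at hpsI
          exact hpsI
        · -- stall of fan 2
          have hρsU : AffineMap.lineMap (AffineMap.lineMap p zs (sInf T)) q (sSup T2)
              ∈ ⋃ i, X i := hγ2U _ hsI0 hsI1
          have hbρ : (idx q : ℕ) ≤
              (idx (AffineMap.lineMap (AffineMap.lineMap p zs (sInf T)) q (sSup T2)) : ℕ) + 1 := by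
            by_contra hcon
            push_neg at hcon
            obtain ⟨δ3, hδ3, hloc3⟩ := RigidAux.sig_local X hclosed
              (AffineMap.lineMap (AffineMap.lineMap p zs (sInf T)) q (sSup T2))
            have hη3pos : 0 < δ3 / (dist (AffineMap.lineMap p zs (sInf T)) q + 1) := by
              positivity
            have hmemT2 : min 1 (sSup T2 + δ3 / (dist (AffineMap.lineMap p zs (sInf T)) q + 1) / 2)
                ∈ T2 := by
              rw [hT2]
              refine ⟨⟨le_min (by linarith) (by linarith), min_le_left _ _⟩,
                fun θ' h0' hle' => ?_⟩
              rcases le_or_gt θ' (sSup T2) with hle2 | hgt2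
              · rw [hT2] at hsIT2
                exact hsIT2.2 θ' h0' hle2
              · have hub : θ' ≤ sSup T2 + δ3 / (dist (AffineMap.lineMap p zs (sInf T)) q + 1) / 2 :=
                  le_trans hle' (min_le_right _ _)
                have h1' : θ' ≤ 1 := le_trans hle' (min_le_left _ _)
                have hdist : dist (AffineMap.lineMap (AffineMap.lineMap p zs (sInf T)) q θ')
                    (AffineMap.lineMap (AffineMap.lineMap p zs (sInf T)) q (sSup T2)) < δ3 := by
                  rw [dist_lineMap_lineMap]
                  have habs : |θ' - sSup T2| ≤
                      δ3 / (dist (AffineMap.lineMap p zs (sInf T)) q + 1) / 2 :=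
                    abs_le.2 ⟨by linarith, by linarith⟩
                  have h3 : (0:ℝ) ≤ dist (AffineMap.lineMap p zs (sInf T)) q := dist_nonneg
                  calc |θ' - sSup T2| * dist (AffineMap.lineMap p zs (sInf T)) q
                      ≤ (δ3 / (dist (AffineMap.lineMap p zs (sInf T)) q + 1) / 2) *
                        (dist (AffineMap.lineMap p zs (sInf T)) q + 1) := by
                        nlinarith [abs_nonneg (θ' - sSup T2)]
                    _ < (δ3 / (dist (AffineMap.lineMap p zs (sInf T)) q + 1)) *
                        (dist (AffineMap.lineMap p zs (sInf T)) q + 1) := by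
                        apply mul_lt_mul_of_pos_right _ (by linarith)
                        linarith
                    _ = δ3 := by field_simp
                have hsub := hloc3 _ hdist
                have hcc : c (idx (AffineMap.lineMap (AffineMap.lineMap p zs (sInf T)) q θ')) ⊆
                    c (idx (AffineMap.lineMap (AffineMap.lineMap p zs (sInf T)) q (sSup T2))) := by
                  rw [hidx _ (hγ2U θ' h0' h1'), hidx _ hρsU]
                  exact hsub
                have hadj := RigidAux.adj c honly hcc
                exact hGC2 θ' h0' h1' (by omega)
            have hle3 := le_csSup hbdd2 hmemT2
            have hmin : sSup T2 <
                min 1 (sSup T2 + δ3 / (dist (AffineMap.lineMap p zs (sInf T)) q + 1) / 2) :=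
              lt_min hsIlt (by linarith)
            linarith
          obtain ⟨hwρ1, hwρ2⟩ := hwin2 (sSup T2) hsI0 hsI1
          -- ρ* belongs to Z
          have hxsB : AffineMap.lineMap p zs (sInf T)
              ∈ Metric.closedBall (0 : Euc d) (max (max ‖p‖ ‖q‖) ‖y0‖) :=
            hBconv.segment_subset hpB hzsB (RigidAux.lineMap_mem_seg01 p zs htI0 htIlt1.le)
          have hρsB : AffineMap.lineMap (AffineMap.lineMap p zs (sInf T)) q (sSup T2)
              ∈ Metric.closedBall (0 : Euc d) (max (max ‖p‖ ‖q‖) ‖y0‖) :=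
            hBconv.segment_subset hxsB hqB (RigidAux.lineMap_mem_seg01 _ q hsI0 hsI1)
          have hqρs : segment ℝ q
              (AffineMap.lineMap (AffineMap.lineMap p zs (sInf T)) q (sSup T2)) ⊆ ⋃ i, X i := by
            rw [segment_symm]
            exact (RigidAux.seg_sub_right hsI0 hsI1).trans hxsq
          have hρsZ : AffineMap.lineMap (AffineMap.lineMap p zs (sInf T)) q (sSup T2) ∈ Z := by
            rw [hZ]
            exact ⟨hρsB, hpsI, hqρs,
              idx (AffineMap.lineMap (AffineMap.lineMap p zs (sInf T)) q (sSup T2)),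
              by omega, by omega, by rw [hidx _ hρsU]⟩
          -- the distance to the segment strictly decreases: contradiction with minimality
          have hfp : Metric.infDist p (segment ℝ p q) = 0 :=
            Metric.infDist_zero_of_mem (left_mem_segment ℝ p q)
          have hfq : Metric.infDist q (segment ℝ p q) = 0 :=
            Metric.infDist_zero_of_mem (right_mem_segment ℝ p q)
          have hfxs : Metric.infDist (AffineMap.lineMap p zs (sInf T)) (segment ℝ p q)
              ≤ sInf T * Metric.infDist zs (segment ℝ p q) := by
            have h := RigidAux.infDist_lineMap_le hSconv hSne hScp p zs htI0 htIlt1.le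
            rw [hfp] at h
            linarith
          have hfρs : Metric.infDist
              (AffineMap.lineMap (AffineMap.lineMap p zs (sInf T)) q (sSup T2)) (segment ℝ p q)
              ≤ (1 - sSup T2) * Metric.infDist (AffineMap.lineMap p zs (sInf T))
                (segment ℝ p q) := by
            have h := RigidAux.infDist_lineMap_le hSconv hSne hScp
              (AffineMap.lineMap p zs (sInf T)) q hsI0 hsI1
            rw [hfq] at h
            linarith
          have hxsnn : 0 ≤ Metric.infDist (AffineMap.lineMap p zs (sInf T)) (segment ℝ p q) :=
            Metric.infDist_nonneg
          have hρnn : 0 ≤ Metric.infDist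
              (AffineMap.lineMap (AffineMap.lineMap p zs (sInf T)) q (sSup T2))
              (segment ℝ p q) := Metric.infDist_nonneg
          have hlt : Metric.infDist
              (AffineMap.lineMap (AffineMap.lineMap p zs (sInf T)) q (sSup T2)) (segment ℝ p q)
              < Metric.infDist zs (segment ℝ p q) := by
            nlinarith
          have hge := isMinOn_iff.mp hzsmin _ hρsZ
          exact absurd hge (not_le.2 hlt)

  rw [convex_iff_segment_subset]
  intro p hp q hq
  rcases le_total ((idx p : ℕ)) ((idx q : ℕ)) with h | h
  · exact key ((idx q : ℕ) - (idx p : ℕ)) p q hp hq (by omega)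
  · rw [segment_symm]
    exact key ((idx p : ℕ) - (idx q : ℕ)) q p hq hp (by omega)


end
end

section
/- For every d with 2 ≤ d < ∞, the code C_{(2,2,d)} has an open convex realization in ℝ^2. -/
open Set

noncomputable section

/-- Index of `α_i` in the base set of `C_{(2,2,d)}`. -/
def jdxA (d : ℕ) (i : Fin d) : Fin (3 * d) := ⟨i.1, by have := i.2; omega⟩
/-- Index of `β_i` in the base set of `C_{(2,2,d)}`. -/
def jdxB (d : ℕ) (i : Fin d) : Fin (3 * d) := ⟨d + i.1, by have := i.2; omega⟩
/-- Index of `γ_i` in the base set of `C_{(2,2,d)}`. -/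
def jdxC (d : ℕ) (i : Fin d) : Fin (3 * d) := ⟨2 * d + i.1, by have := i.2; omega⟩

/-- The code `C_{(2,2,d)}` on the `3d` neurons `α_1,…,α_d,β_1,…,β_d,γ_1,…,γ_d`. -/
def code22d (d : ℕ) : Set (Finset (Fin (3 * d))) :=
  {σ | σ = ∅ ∨
    (∃ i : Fin d, σ = {jdxB d i, jdxC d i}) ∨
    (∃ i j : Fin d, (j : ℕ) = (i : ℕ) + 1 ∧ σ = {jdxB d i, jdxB d j, jdxC d i}) ∨
    (∃ i j : Fin d, (j : ℕ) = (i : ℕ) + 1 ∧ σ = {jdxB d i, jdxB d j}) ∨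
    (∃ i j : Fin d, (j : ℕ) = (i : ℕ) + 1 ∧ σ = {jdxB d i, jdxB d j, jdxC d j}) ∨
    (∃ i : Fin d, σ = {jdxA d i, jdxB d i, jdxC d i}) ∨
    (∃ i : Fin d, σ = {jdxA d i}) ∨
    σ = Finset.univ.image (jdxA d)}

namespace C22

/-- the line `λ_k` tangent to `y = x²` at `x = k`. -/
def lam (k : ℕ) (x : ℝ) : ℝ := 2*k*x - (k:ℝ)^2
/-- steep line through `(j+1/4, -1)` and `(j+1/2, j²+j)`. -/
def LR (j : ℕ) (x : ℝ) : ℝ := -1 + 4*((j:ℝ)^2+j+1)*(x - j - 1/4)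
/-- steep line through `(j-1/4, -1)` and `(j-1/2, j²-j)`. -/
def LL (j : ℕ) (x : ℝ) : ℝ := -1 + 4*((j:ℝ)^2-j+1)*((j:ℝ) - 1/4 - x)

def Aset (d i : ℕ) : Set (Euc 2) := {p | ∀ k, k < d → k ≠ i → lam k (p 0) < p 1}
def Bset (j : ℕ) : Set (Euc 2) :=
  {p | -1 < p 1 ∧ p 1 < lam j (p 0) ∧ (j:ℝ) - 3/4 < p 0 ∧ p 0 < (j:ℝ) + 3/4}
def Cset (d j : ℕ) : Set (Euc 2) :=
  {p | p ∈ Bset j ∧ (1 ≤ j → LL j (p 0) < p 1) ∧ (j + 2 ≤ d → LR j (p 0) < p 1)}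

def US (d : ℕ) (m : Fin (3*d)) : Set (Euc 2) :=
  if m.1 < d then Aset d m.1 else if m.1 < 2*d then Bset (m.1 - d) else Cset d (m.1 - 2*d)

/- ## Convexity -/

lemma combo {a b pa pb qa qb : ℝ} (ha : 0 ≤ a) (hb : 0 ≤ b) (hab : a + b = 1)
    (h1 : pa < pb) (h2 : qa < qb) : a*pa + b*qa < a*pb + b*qb := by
  rcases eq_or_lt_of_le ha with h | h
  · have hb1 : b = 1 := by linarith
    rw [← h, hb1]; simpa using h2
  · have t1 := mul_lt_mul_of_pos_left h1 h
    have t2 := mul_le_mul_of_nonneg_left h2.le hb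
    linarith

lemma coord0 (a b : ℝ) (p q : Euc 2) : (a • p + b • q) 0 = a * p 0 + b * q 0 := rfl
lemma coord1 (a b : ℝ) (p q : Euc 2) : (a • p + b • q) 1 = a * p 1 + b * q 1 := rfl

lemma lam_combo (j : ℕ) {a b : ℝ} (hab : a + b = 1) (xp xq : ℝ) :
    a * lam j xp + b * lam j xq = lam j (a*xp + b*xq) := by
  unfold lam; linear_combination (-(j:ℝ)^2) * hab

lemma LL_combo (j : ℕ) {a b : ℝ} (hab : a + b = 1) (xp xq : ℝ) :
    a * LL j xp + b * LL j xq = LL j (a*xp + b*xq) := by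
  unfold LL; linear_combination (-1 + 4*((j:ℝ)^2-j+1)*((j:ℝ) - 1/4)) * hab

lemma LR_combo (j : ℕ) {a b : ℝ} (hab : a + b = 1) (xp xq : ℝ) :
    a * LR j xp + b * LR j xq = LR j (a*xp + b*xq) := by
  unfold LR; linear_combination (-1 + 4*((j:ℝ)^2+j+1)*(-(j:ℝ) - 1/4)) * hab

lemma const_combo {a b : ℝ} (hab : a + b = 1) (c : ℝ) : a * c + b * c = c := by
  linear_combination c * hab

lemma convex_Bset (j : ℕ) : Convex ℝ (Bset j) := by
  intro p hp q hq a b ha hb hab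
  obtain ⟨h1, h2, h3, h4⟩ := hp
  obtain ⟨k1, k2, k3, k4⟩ := hq
  refine ⟨?_, ?_, ?_, ?_⟩
  · show -1 < a * p 1 + b * q 1
    have := combo ha hb hab h1 k1
    have e := const_combo hab (-1)
    linarith
  · show a * p 1 + b * q 1 < lam j (a * p 0 + b * q 0)
    have := combo ha hb hab h2 k2
    have e := lam_combo j hab (p 0) (q 0)
    linarith
  · show (j:ℝ) - 3/4 < a * p 0 + b * q 0
    have := combo ha hb hab h3 k3
    have e := const_combo hab ((j:ℝ) - 3/4)
    linarith
  · show a * p 0 + b * q 0 < (j:ℝ) + 3/4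
    have := combo ha hb hab h4 k4
    have e := const_combo hab ((j:ℝ) + 3/4)
    linarith

lemma convex_Aset (d i : ℕ) : Convex ℝ (Aset d i) := by
  intro p hp q hq a b ha hb hab
  intro k hk hki
  show lam k (a * p 0 + b * q 0) < a * p 1 + b * q 1
  have := combo ha hb hab (hp k hk hki) (hq k hk hki)
  have e := lam_combo k hab (p 0) (q 0)
  linarith

lemma convex_Cset (d j : ℕ) : Convex ℝ (Cset d j) := by
  intro p hp q hq a b ha hb hab
  obtain ⟨hpB, hp1, hp2⟩ := hp
  obtain ⟨hqB, hq1, hq2⟩ := hq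
  refine ⟨convex_Bset j hpB hqB ha hb hab, ?_, ?_⟩
  · intro hj
    show LL j (a * p 0 + b * q 0) < a * p 1 + b * q 1
    have := combo ha hb hab (hp1 hj) (hq1 hj)
    have e := LL_combo j hab (p 0) (q 0)
    linarith
  · intro hj
    show LR j (a * p 0 + b * q 0) < a * p 1 + b * q 1
    have := combo ha hb hab (hp2 hj) (hq2 hj)
    have e := LR_combo j hab (p 0) (q 0)
    linarith

/- ## Openness -/

lemma cont_x : Continuous fun p : Euc 2 => p 0 := (continuous_apply 0).comp (PiLp.continuous_ofLp 2 _)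
lemma cont_y : Continuous fun p : Euc 2 => p 1 := (continuous_apply 1).comp (PiLp.continuous_ofLp 2 _)

lemma cont_affine (α β : ℝ) : Continuous fun p : Euc 2 => α * p 0 + β := by
  exact (continuous_const.mul cont_x).add continuous_const

lemma isOpen_slab (α β : ℝ) : IsOpen {p : Euc 2 | α * p 0 + β < p 1} :=
  isOpen_lt (cont_affine α β) cont_y

lemma isOpen_slab' (α β : ℝ) : IsOpen {p : Euc 2 | p 1 < α * p 0 + β} :=
  isOpen_lt cont_y (cont_affine α β)

lemma cont_lam (j : ℕ) : Continuous fun p : Euc 2 => lam j (p 0) := by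
  unfold lam; exact (continuous_const.mul cont_x).sub continuous_const

lemma cont_LL (j : ℕ) : Continuous fun p : Euc 2 => LL j (p 0) := by
  unfold LL; exact continuous_const.add (continuous_const.mul (continuous_const.sub cont_x))

lemma cont_LR (j : ℕ) : Continuous fun p : Euc 2 => LR j (p 0) := by
  unfold LR
  exact continuous_const.add (continuous_const.mul ((cont_x.sub continuous_const).sub continuous_const))

lemma isOpen_Bset (j : ℕ) : IsOpen (Bset j) := by
  have h1 : IsOpen {p : Euc 2 | -1 < p 1} := isOpen_lt continuous_const cont_y
  have h2 : IsOpen {p : Euc 2 | p 1 < lam j (p 0)} := isOpen_lt cont_y (cont_lam j)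
  have h3 : IsOpen {p : Euc 2 | (j:ℝ) - 3/4 < p 0} := isOpen_lt continuous_const cont_x
  have h4 : IsOpen {p : Euc 2 | p 0 < (j:ℝ) + 3/4} := isOpen_lt cont_x continuous_const
  have e : Bset j = {p : Euc 2 | -1 < p 1} ∩ ({p : Euc 2 | p 1 < lam j (p 0)} ∩
      ({p : Euc 2 | (j:ℝ) - 3/4 < p 0} ∩ {p : Euc 2 | p 0 < (j:ℝ) + 3/4})) := rfl
  rw [e]; exact h1.inter (h2.inter (h3.inter h4))

lemma isOpen_Cset (d j : ℕ) : IsOpen (Cset d j) := by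
  have e : Cset d j = Bset j ∩ ({p : Euc 2 | 1 ≤ j → LL j (p 0) < p 1} ∩
      {p : Euc 2 | j + 2 ≤ d → LR j (p 0) < p 1}) := rfl
  rw [e]
  refine (isOpen_Bset j).inter (IsOpen.inter ?_ ?_)
  · by_cases h : 1 ≤ j
    · have : {p : Euc 2 | 1 ≤ j → LL j (p 0) < p 1} = {p : Euc 2 | LL j (p 0) < p 1} := by
        ext p; simp [h]
      rw [this]; exact isOpen_lt (cont_LL j) cont_y
    · have : {p : Euc 2 | 1 ≤ j → LL j (p 0) < p 1} = univ := by
        ext p; simp [h]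
      rw [this]; exact isOpen_univ
  · by_cases h : j + 2 ≤ d
    · have : {p : Euc 2 | j + 2 ≤ d → LR j (p 0) < p 1} = {p : Euc 2 | LR j (p 0) < p 1} := by
        ext p; simp [h]
      rw [this]; exact isOpen_lt (cont_LR j) cont_y
    · have : {p : Euc 2 | j + 2 ≤ d → LR j (p 0) < p 1} = univ := by
        ext p; simp [h]
      rw [this]; exact isOpen_univ

lemma isOpen_Aset (d i : ℕ) : IsOpen (Aset d i) := by
  have e : Aset d i = ⋂ k ∈ Finset.range d, {p : Euc 2 | k ≠ i → lam k (p 0) < p 1} := by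
    ext p; simp [Aset, Set.mem_iInter]
  rw [e]
  apply isOpen_biInter_finset
  intro k _
  by_cases hk : k = i
  · have : {p : Euc 2 | k ≠ i → lam k (p 0) < p 1} = univ := by ext p; simp [hk]
    rw [this]; exact isOpen_univ
  · have : {p : Euc 2 | k ≠ i → lam k (p 0) < p 1} = {p : Euc 2 | lam k (p 0) < p 1} := by
      ext p; simp [hk]
    rw [this]; exact isOpen_lt (cont_lam k) cont_y


/- ## Index bookkeeping -/

section idx
variable {d : ℕ}

lemma eqAA {i k : Fin d} : jdxA d i = jdxA d k ↔ i.1 = k.1 := by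
  simp [jdxA, Fin.ext_iff]
lemma eqBB {i k : Fin d} : jdxB d i = jdxB d k ↔ i.1 = k.1 := by
  simp [jdxB, Fin.ext_iff]
lemma eqCC {i k : Fin d} : jdxC d i = jdxC d k ↔ i.1 = k.1 := by
  simp [jdxC, Fin.ext_iff]
lemma neAB {i k : Fin d} : jdxA d i ≠ jdxB d k := by
  have := i.2; simp [jdxA, jdxB, Fin.ext_iff]; omega
lemma neAC {i k : Fin d} : jdxA d i ≠ jdxC d k := by
  have := i.2; simp [jdxA, jdxC, Fin.ext_iff]; omega
lemma neBC {i k : Fin d} : jdxB d i ≠ jdxC d k := by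
  have := i.2; simp [jdxB, jdxC, Fin.ext_iff]; omega
lemma neBA {i k : Fin d} : jdxB d i ≠ jdxA d k := neAB.symm
lemma neCA {i k : Fin d} : jdxC d i ≠ jdxA d k := neAC.symm
lemma neCB {i k : Fin d} : jdxC d i ≠ jdxB d k := neBC.symm

lemma US_A (i : Fin d) : US d (jdxA d i) = Aset d i.1 := by
  unfold US jdxA; simp [i.2]
lemma US_B (i : Fin d) : US d (jdxB d i) = Bset i.1 := by
  have := i.2
  show (if d + i.1 < d then _ else if d + i.1 < 2*d then Bset (d + i.1 - d) else _) = _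
  have e : d + i.1 - d = i.1 := by omega
  rw [if_neg (by omega), if_pos (by omega), e]
lemma US_C (i : Fin d) : US d (jdxC d i) = Cset d i.1 := by
  have := i.2
  show (if 2*d + i.1 < d then _ else if 2*d + i.1 < 2*d then _ else Cset d (2*d + i.1 - 2*d)) = _
  have e : 2*d + i.1 - 2*d = i.1 := by omega
  rw [if_neg (by omega), if_neg (by omega), e]

lemma fin3d_cases (m : Fin (3*d)) :
    (∃ i : Fin d, m = jdxA d i) ∨ (∃ i : Fin d, m = jdxB d i) ∨ (∃ i : Fin d, m = jdxC d i) := by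
  have hm := m.2
  rcases Nat.lt_or_ge m.1 d with h | h
  · exact Or.inl ⟨⟨m.1, h⟩, by simp [jdxA]⟩
  rcases Nat.lt_or_ge m.1 (2*d) with h2 | h2
  · exact Or.inr (Or.inl ⟨⟨m.1 - d, by omega⟩, by simp [jdxB, Fin.ext_iff]; omega⟩)
  · exact Or.inr (Or.inr ⟨⟨m.1 - 2*d, by omega⟩, by simp [jdxC, Fin.ext_iff]; omega⟩)

lemma patt_spec (p : Euc 2) (σ : Finset (Fin (3*d)))
    (hA : ∀ i : Fin d, p ∈ Aset d i.1 ↔ jdxA d i ∈ σ)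
    (hB : ∀ i : Fin d, p ∈ Bset i.1 ↔ jdxB d i ∈ σ)
    (hC : ∀ i : Fin d, p ∈ Cset d i.1 ↔ jdxC d i ∈ σ) :
    ∀ m : Fin (3*d), p ∈ US d m ↔ m ∈ σ := by
  intro m
  rcases fin3d_cases m with ⟨i, rfl⟩ | ⟨i, rfl⟩ | ⟨i, rfl⟩
  · rw [US_A]; exact hA i
  · rw [US_B]; exact hB i
  · rw [US_C]; exact hC i

end idx

/- ## Key geometric lemmas -/

lemma Bwin {j k : ℕ} {p : Euc 2} (hj : p ∈ Bset j) (hk : p ∈ Bset k) :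
    k = j ∨ k = j + 1 ∨ j = k + 1 := by
  obtain ⟨_, _, a3, a4⟩ := hj; obtain ⟨_, _, b3, b4⟩ := hk
  have h1' : j < k + 2 := by exact_mod_cast (by push_cast; linarith : (j:ℝ) < ((k+2:ℕ):ℝ))
  have h2' : k < j + 2 := by exact_mod_cast (by push_cast; linarith : (k:ℝ) < ((j+2:ℕ):ℝ))
  omega

lemma A_unique {d m j : ℕ} {p : Euc 2} (hj : j < d) (hB : p ∈ Bset j) (hA : p ∈ Aset d m) :
    m = j := by
  by_contra h
  have h1 := hA j hj (fun e => h e.symm)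
  have h2 := hB.2.1
  linarith

lemma lemm1R {d j : ℕ} {p : Euc 2} (hd : j + 2 ≤ d) (hB : p ∈ Bset j)
    (hnB : p ∉ Bset (j+1)) : LR j (p 0) < p 1 := by
  by_contra hcon
  push_neg at hcon
  obtain ⟨h1, h2, h3, h4⟩ := hB
  apply hnB
  have hj0 : (0:ℝ) < 4*((j:ℝ)^2+(j:ℝ)+1) := by positivity
  have hprod : 0 < 4*((j:ℝ)^2+(j:ℝ)+1) * (p 0 - (j:ℝ) - 1/4) := by
    unfold LR at hcon; nlinarith
  have hx : (j:ℝ) + 1/4 < p 0 := by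
    by_contra hxx; push_neg at hxx
    nlinarith [mul_nonpos_of_nonneg_of_nonpos hj0.le
      (by linarith : p 0 - (j:ℝ) - 1/4 ≤ 0)]
  refine ⟨h1, ?_, by push_cast; linarith, by push_cast; linarith⟩
  rcases le_or_gt ((j:ℝ) + 1/2) (p 0) with hc | hc
  · have : lam j (p 0) ≤ lam (j+1) (p 0) := by unfold lam; push_cast; nlinarith
    linarith
  · have : LR j (p 0) < lam (j+1) (p 0) := by
      unfold LR lam; push_cast
      nlinarith [mul_pos (show (0:ℝ) < 4*(j:ℝ)^2+2*(j:ℝ)+2 by positivity)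
        (show (0:ℝ) < (j:ℝ)+1/2 - p 0 by linarith)]
    linarith

lemma lemm1L {j : ℕ} {p : Euc 2} (hB : p ∈ Bset (j+1)) (hnB : p ∉ Bset j) :
    LL (j+1) (p 0) < p 1 := by
  by_contra hcon
  push_neg at hcon
  obtain ⟨h1, h2, h3, h4⟩ := hB
  unfold LL at hcon; push_cast at hcon
  push_cast at h3 h4
  apply hnB
  have hj0 : (0:ℝ) < 4*(((j:ℝ)+1)^2-((j:ℝ)+1)+1) := by nlinarith [sq_nonneg ((j:ℝ)+1/2)]
  have hx : p 0 < (j:ℝ) + 3/4 := by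
    by_contra hxx; push_neg at hxx
    nlinarith [mul_nonpos_of_nonneg_of_nonpos hj0.le
      (by linarith : (j:ℝ) + 1 - 1/4 - p 0 ≤ 0)]
  refine ⟨h1, ?_, by linarith, by linarith⟩
  rcases le_or_gt (p 0) ((j:ℝ) + 1/2) with hc | hc
  · have : lam (j+1) (p 0) ≤ lam j (p 0) := by unfold lam; push_cast; nlinarith
    linarith
  · have : -1 + 4*(((j:ℝ)+1)^2-((j:ℝ)+1)+1)*((j:ℝ) + 1 - 1/4 - p 0) < lam j (p 0) := by
      unfold lam; push_cast
      nlinarith [mul_pos (show (0:ℝ) < 4*(j:ℝ)^2+6*(j:ℝ)+4 by positivity)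
        (show (0:ℝ) < p 0 - (j:ℝ) - 1/2 by linarith)]
    linarith

lemma Cdisj {d j : ℕ} (hd : j + 2 ≤ d) {p : Euc 2} (h1 : p ∈ Cset d j)
    (h2 : p ∈ Cset d (j+1)) : False := by
  obtain ⟨hB1, _, hR⟩ := h1
  have hR := hR hd
  obtain ⟨hB2, hL, _⟩ := h2
  have hL := hL (by omega)
  have e1 : p 0 < (j:ℝ) + 1/2 := by
    by_contra hc; push_neg at hc
    have hy1 : LR j (p 0) < lam j (p 0) := by linarith [hB1.2.1]
    unfold lam LR at hy1
    nlinarith [mul_nonneg (show (0:ℝ) ≤ 4*(j:ℝ)^2+2*(j:ℝ)+4 by positivity)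
      (show (0:ℝ) ≤ p 0 - (j:ℝ) - 1/2 by linarith)]
  have e2 : (j:ℝ) + 1/2 < p 0 := by
    by_contra hc; push_neg at hc
    have hy2 : LL (j+1) (p 0) < lam (j+1) (p 0) := by linarith [hB2.2.1]
    unfold lam LL at hy2; push_cast at hy2
    nlinarith [mul_nonneg (show (0:ℝ) ≤ 4*(j:ℝ)^2+6*(j:ℝ)+6 by positivity)
      (show (0:ℝ) ≤ (j:ℝ) + 1/2 - p 0 by linarith)]
  linarith

/- ## Classification: every point realizes a codeword -/

lemma realize (d : ℕ) (p : Euc 2) :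
    ∃ σ ∈ code22d d, ∀ m : Fin (3*d), p ∈ US d m ↔ m ∈ σ := by
  classical
  by_cases hB : ∃ j, j < d ∧ p ∈ Bset j
  · obtain ⟨j, hjd, hjB, hmin⟩ : ∃ j, j < d ∧ p ∈ Bset j ∧ ∀ k, k < j → p ∉ Bset k := by
      refine ⟨Nat.find hB, (Nat.find_spec hB).1, (Nat.find_spec hB).2, ?_⟩
      intro k hk hc
      exact Nat.find_min hB hk ⟨lt_trans hk (Nat.find_spec hB).1, hc⟩
    have honly : ∀ k, k < d → p ∈ Bset k → k = j ∨ k = j + 1 := by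
      intro k hk hBk
      rcases Bwin hjB hBk with h | h | h
      · exact Or.inl h
      · exact Or.inr h
      · exact absurd hBk (hmin k (by omega))
    by_cases h2 : j + 1 < d ∧ p ∈ Bset (j+1)
    · -- two B's
      obtain ⟨hj1d, hj1B⟩ := h2
      have hAnone : ∀ i : Fin d, p ∉ Aset d i.1 := by
        intro i hA
        have e1 := A_unique hjd hjB hA
        have e2 := A_unique hj1d hj1B hA
        omega
      have hBiff : ∀ i : Fin d, p ∈ Bset i.1 ↔ (i.1 = j ∨ i.1 = j+1) := by
        intro i
        constructor
        · intro h; exact honly i.1 i.2 h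
        · rintro (h | h)
          · rw [h]; exact hjB
          · rw [h]; exact hj1B
      by_cases hCj : p ∈ Cset d j
      · have hCnot1 : p ∉ Cset d (j+1) := fun hc => Cdisj (by omega) hCj hc
        refine ⟨{jdxB d ⟨j, hjd⟩, jdxB d ⟨j+1, hj1d⟩, jdxC d ⟨j, hjd⟩},
          Or.inr (Or.inr (Or.inl ⟨⟨j, hjd⟩, ⟨j+1, hj1d⟩, rfl, rfl⟩)), ?_⟩
        apply patt_spec
        · intro i
          exact iff_of_false (hAnone i) (by simp [neAB, neAC])
        · intro i
          have e : jdxB d i ∈ ({jdxB d ⟨j, hjd⟩, jdxB d ⟨j+1, hj1d⟩, jdxC d ⟨j, hjd⟩} :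
              Finset (Fin (3*d))) ↔ (i.1 = j ∨ i.1 = j+1) := by simp [eqBB, neBC]
          rw [e]; exact hBiff i
        · intro i
          have e : jdxC d i ∈ ({jdxB d ⟨j, hjd⟩, jdxB d ⟨j+1, hj1d⟩, jdxC d ⟨j, hjd⟩} :
              Finset (Fin (3*d))) ↔ i.1 = j := by simp [eqCC, neCB]
          rw [e]
          constructor
          · intro hC
            rcases honly i.1 i.2 hC.1 with h | h
            · exact h
            · exact absurd (h ▸ hC) hCnot1
          · intro h; rw [h]; exact hCj
      · by_cases hCj1 : p ∈ Cset d (j+1)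
        · refine ⟨{jdxB d ⟨j, hjd⟩, jdxB d ⟨j+1, hj1d⟩, jdxC d ⟨j+1, hj1d⟩},
            Or.inr (Or.inr (Or.inr (Or.inr (Or.inl ⟨⟨j, hjd⟩, ⟨j+1, hj1d⟩, rfl, rfl⟩)))), ?_⟩
          apply patt_spec
          · intro i
            exact iff_of_false (hAnone i) (by simp [neAB, neAC])
          · intro i
            have e : jdxB d i ∈ ({jdxB d ⟨j, hjd⟩, jdxB d ⟨j+1, hj1d⟩, jdxC d ⟨j+1, hj1d⟩} :
                Finset (Fin (3*d))) ↔ (i.1 = j ∨ i.1 = j+1) := by simp [eqBB, neBC]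
            rw [e]; exact hBiff i
          · intro i
            have e : jdxC d i ∈ ({jdxB d ⟨j, hjd⟩, jdxB d ⟨j+1, hj1d⟩, jdxC d ⟨j+1, hj1d⟩} :
                Finset (Fin (3*d))) ↔ i.1 = j+1 := by simp [eqCC, neCB]
            rw [e]
            constructor
            · intro hC
              rcases honly i.1 i.2 hC.1 with h | h
              · exact absurd (h ▸ hC) hCj
              · exact h
            · intro h; rw [h]; exact hCj1
        · refine ⟨{jdxB d ⟨j, hjd⟩, jdxB d ⟨j+1, hj1d⟩},
            Or.inr (Or.inr (Or.inr (Or.inl ⟨⟨j, hjd⟩, ⟨j+1, hj1d⟩, rfl, rfl⟩))), ?_⟩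
          apply patt_spec
          · intro i
            exact iff_of_false (hAnone i) (by simp [neAB])
          · intro i
            have e : jdxB d i ∈ ({jdxB d ⟨j, hjd⟩, jdxB d ⟨j+1, hj1d⟩} :
                Finset (Fin (3*d))) ↔ (i.1 = j ∨ i.1 = j+1) := by simp [eqBB]
            rw [e]; exact hBiff i
          · intro i
            refine iff_of_false ?_ (by simp [neCB])
            intro hC
            rcases honly i.1 i.2 hC.1 with h | h
            · exact hCj (h ▸ hC)
            · exact hCj1 (h ▸ hC)
    · -- a single B
      push_neg at h2
      have hone : ∀ k, k < d → p ∈ Bset k → k = j := by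
        intro k hk hBk
        rcases honly k hk hBk with h | h
        · exact h
        · exact absurd (h ▸ hBk) (h2 (h ▸ hk))
      have hCj : p ∈ Cset d j := by
        refine ⟨hjB, ?_, ?_⟩
        · intro h1j
          obtain ⟨j', rfl⟩ : ∃ j', j = j' + 1 := ⟨j - 1, by omega⟩
          exact lemm1L hjB (fun hc => by have := hone j' (by omega) hc; omega)
        · intro hj2
          exact lemm1R hj2 hjB (fun hc => absurd (hone (j+1) (by omega) hc) (by omega))
      have hBiff : ∀ i : Fin d, p ∈ Bset i.1 ↔ i.1 = j := by
        intro i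
        constructor
        · intro h; exact hone i.1 i.2 h
        · intro h; rw [h]; exact hjB
      have hCiff : ∀ i : Fin d, p ∈ Cset d i.1 ↔ i.1 = j := by
        intro i
        constructor
        · intro h; exact hone i.1 i.2 h.1
        · intro h; rw [h]; exact hCj
      by_cases hAj : p ∈ Aset d j
      · refine ⟨{jdxA d ⟨j, hjd⟩, jdxB d ⟨j, hjd⟩, jdxC d ⟨j, hjd⟩},
          Or.inr (Or.inr (Or.inr (Or.inr (Or.inr (Or.inl ⟨⟨j, hjd⟩, rfl⟩))))), ?_⟩
        apply patt_spec
        · intro i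
          have e : jdxA d i ∈ ({jdxA d ⟨j, hjd⟩, jdxB d ⟨j, hjd⟩, jdxC d ⟨j, hjd⟩} :
              Finset (Fin (3*d))) ↔ i.1 = j := by simp [eqAA, neAB, neAC]
          rw [e]
          constructor
          · intro h; exact A_unique hjd hjB h
          · intro h; rw [h]; exact hAj
        · intro i
          have e : jdxB d i ∈ ({jdxA d ⟨j, hjd⟩, jdxB d ⟨j, hjd⟩, jdxC d ⟨j, hjd⟩} :
              Finset (Fin (3*d))) ↔ i.1 = j := by simp [eqBB, neBA, neBC]
          rw [e]; exact hBiff i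
        · intro i
          have e : jdxC d i ∈ ({jdxA d ⟨j, hjd⟩, jdxB d ⟨j, hjd⟩, jdxC d ⟨j, hjd⟩} :
              Finset (Fin (3*d))) ↔ i.1 = j := by simp [eqCC, neCA, neCB]
          rw [e]; exact hCiff i
      · refine ⟨{jdxB d ⟨j, hjd⟩, jdxC d ⟨j, hjd⟩},
          Or.inr (Or.inl ⟨⟨j, hjd⟩, rfl⟩), ?_⟩
        apply patt_spec
        · intro i
          refine iff_of_false ?_ (by simp [neAB, neAC])
          intro h
          exact hAj ((A_unique hjd hjB h) ▸ h)
        · intro i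
          have e : jdxB d i ∈ ({jdxB d ⟨j, hjd⟩, jdxC d ⟨j, hjd⟩} :
              Finset (Fin (3*d))) ↔ i.1 = j := by simp [eqBB, neBC]
          rw [e]; exact hBiff i
        · intro i
          have e : jdxC d i ∈ ({jdxB d ⟨j, hjd⟩, jdxC d ⟨j, hjd⟩} :
              Finset (Fin (3*d))) ↔ i.1 = j := by simp [eqCC, neCB]
          rw [e]; exact hCiff i
  · -- no B at all
    push_neg at hB
    have hnB : ∀ i : Fin d, p ∉ Bset i.1 := fun i => hB i.1 i.2
    have hnC : ∀ i : Fin d, p ∉ Cset d i.1 := fun i hc => hB i.1 i.2 hc.1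
    by_cases hA1 : ∃ i, i < d ∧ p ∈ Aset d i
    · obtain ⟨i, hid, hiA⟩ := hA1
      by_cases hA2 : ∃ k, k < d ∧ k ≠ i ∧ p ∈ Aset d k
      · obtain ⟨k, hkd, hki, hkA⟩ := hA2
        refine ⟨Finset.univ.image (jdxA d),
          Or.inr (Or.inr (Or.inr (Or.inr (Or.inr (Or.inr (Or.inr rfl)))))), ?_⟩
        apply patt_spec
        · intro i'
          simp only [Finset.mem_image, Finset.mem_univ, true_and]
          constructor
          · intro _; exact ⟨i', rfl⟩
          · intro _ m hm hmi'
            by_cases hmi : m = i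
            · rw [hmi]; exact hkA i hid (Ne.symm hki)
            · exact hiA m hm hmi
        · intro i'; exact iff_of_false (hnB i') (by simp [neAB])
        · intro i'; exact iff_of_false (hnC i') (by simp [neAC])
      · push_neg at hA2
        refine ⟨{jdxA d ⟨i, hid⟩},
          Or.inr (Or.inr (Or.inr (Or.inr (Or.inr (Or.inr (Or.inl ⟨⟨i, hid⟩, rfl⟩)))))), ?_⟩
        apply patt_spec
        · intro i'
          have e : jdxA d i' ∈ ({jdxA d ⟨i, hid⟩} : Finset (Fin (3*d))) ↔ i'.1 = i := by
            simp [eqAA]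
          rw [e]
          constructor
          · intro h
            by_contra hne
            exact hA2 i'.1 i'.2 hne h
          · intro h; rw [h]; exact hiA
        · intro i'; exact iff_of_false (hnB i') (by simp [neBA])
        · intro i'; exact iff_of_false (hnC i') (by simp [neCA])
    · push_neg at hA1
      refine ⟨∅, Or.inl rfl, ?_⟩
      apply patt_spec
      · intro i; exact iff_of_false (hA1 i.1 i.2) (by simp)
      · intro i; exact iff_of_false (hnB i) (by simp)
      · intro i; exact iff_of_false (hnC i) (by simp)

/- ## Witness points for each codeword -/

def mkp (x y : ℝ) : Euc 2 := (WithLp.equiv 2 _).symm ![x, y]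
@[simp] lemma mkp0 (x y : ℝ) : mkp x y 0 = x := rfl
@[simp] lemma mkp1 (x y : ℝ) : mkp x y 1 = y := rfl

lemma nat_close {i j : ℕ} (h1 : (i:ℝ) < (j:ℝ) + 1) (h2 : (j:ℝ) < (i:ℝ) + 1) : i = j := by
  have a : i < j + 1 := by exact_mod_cast (by push_cast; linarith : (i:ℝ) < ((j+1:ℕ):ℝ))
  have b : j < i + 1 := by exact_mod_cast (by push_cast; linarith : (j:ℝ) < ((i+1:ℕ):ℝ))
  omega

lemma cast_sq_ge_one {i m : ℕ} (h : m ≠ i) : 1 ≤ ((i:ℝ) - (m:ℝ))^2 := by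
  rcases lt_or_gt_of_ne h with hl | hl
  · have : (m:ℝ) + 1 ≤ (i:ℝ) := by exact_mod_cast Nat.succ_le_of_lt hl
    nlinarith
  · have : (i:ℝ) + 1 ≤ (m:ℝ) := by exact_mod_cast Nat.succ_le_of_lt hl
    nlinarith

lemma Bpin1 {k n : ℕ} {x y : ℝ} (h : mkp x y ∈ Bset k)
    (h1 : (n:ℝ) - 1/4 ≤ x) (h2 : x ≤ (n:ℝ) + 1/4) : k = n := by
  obtain ⟨_, _, h3, h4⟩ := h
  simp only [mkp0] at h3 h4
  exact nat_close (by linarith) (by linarith)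

lemma Bpin2 {k n : ℕ} {x y : ℝ} (h : mkp x y ∈ Bset k)
    (h1 : (n:ℝ) + 1/4 ≤ x) (h2 : x ≤ (n:ℝ) + 3/4) : k = n ∨ k = n + 1 := by
  obtain ⟨_, _, h3, h4⟩ := h
  simp only [mkp0] at h3 h4
  have a : n < k + 1 := by
    exact_mod_cast (by push_cast; linarith : (n:ℝ) < ((k+1:ℕ):ℝ))
  have b : k < n + 2 := by
    exact_mod_cast (by push_cast; linarith : (k:ℝ) < ((n+2:ℕ):ℝ))
  omega

/-- witness for the empty codeword -/
lemma wit_0 (d : ℕ) (hd : 2 ≤ d) :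
    ∀ m : Fin (3*d), mkp 0 (-2) ∈ US d m ↔ m ∈ (∅ : Finset (Fin (3*d))) := by
  apply patt_spec
  · intro i
    refine iff_of_false ?_ (by simp)
    intro hA
    by_cases h0 : i.1 = 0
    · have := hA 1 (by omega) (by omega)
      simp only [mkp0, mkp1] at this; unfold lam at this; norm_num at this
    · have := hA 0 (by omega) (by omega)
      simp only [mkp0, mkp1] at this; unfold lam at this; norm_num at this
  · intro i
    refine iff_of_false ?_ (by simp)
    intro hB
    have := hB.1
    simp only [mkp1] at this; norm_num at this
  · intro i
    refine iff_of_false ?_ (by simp)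
    intro hC
    have := hC.1.1
    simp only [mkp1] at this; norm_num at this

/-- witness for the all-A codeword -/
lemma wit_vii (d : ℕ) :
    ∀ m : Fin (3*d), mkp 0 1 ∈ US d m ↔ m ∈ Finset.univ.image (jdxA d) := by
  apply patt_spec
  · intro i
    refine iff_of_true ?_ (by simp)
    intro k hk hki
    simp only [mkp0, mkp1]; unfold lam
    nlinarith [sq_nonneg (k:ℝ)]
  · intro i
    refine iff_of_false ?_ (by simp [neAB])
    intro hB
    have e : i.1 = 0 := Bpin1 (n := 0) hB (by norm_num) (by norm_num)
    rw [e] at hB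
    have h2 := hB.2.1
    simp only [mkp0, mkp1] at h2; unfold lam at h2; norm_num at h2
  · intro i
    refine iff_of_false ?_ (by simp [neAC])
    intro hC
    have hB := hC.1
    have e : i.1 = 0 := Bpin1 (n := 0) hB (by norm_num) (by norm_num)
    rw [e] at hB
    have h2 := hB.2.1
    simp only [mkp0, mkp1] at h2; unfold lam at h2; norm_num at h2

/-- witness for the single-A codeword -/
lemma wit_vi (d : ℕ) (i : Fin d) :
    ∀ m : Fin (3*d), mkp (i:ℝ) ((i:ℝ)^2) ∈ US d m ↔ m ∈ ({jdxA d i} : Finset (Fin (3*d))) := by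
  have hBn : ∀ k : Fin d, mkp (i:ℝ) ((i:ℝ)^2) ∉ Bset k.1 := by
    intro k hB
    have e : k.1 = i.1 := Bpin1 hB (by norm_num) (by norm_num)
    rw [e] at hB
    have := hB.2.1
    simp only [mkp0, mkp1] at this; unfold lam at this; nlinarith
  apply patt_spec
  · intro i'
    simp only [Finset.mem_singleton, eqAA]
    constructor
    · intro hA
      by_contra hne
      have := hA i.1 i.2 (by omega)
      simp only [mkp0, mkp1] at this; unfold lam at this; nlinarith
    · intro h
      intro k hk hki
      simp only [mkp0, mkp1]; unfold lam
      have hki' : k ≠ i.1 := by omega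
      nlinarith [cast_sq_ge_one hki']
  · intro i'
    exact iff_of_false (hBn i') (by simp [neBA])
  · intro i'
    exact iff_of_false (fun hC => hBn i' hC.1) (by simp [neCA])

/-- witness for the A-B-C codeword -/
lemma wit_v (d : ℕ) (i : Fin d) :
    ∀ m : Fin (3*d), mkp (i:ℝ) ((i:ℝ)^2 - 1/5) ∈ US d m ↔
      m ∈ ({jdxA d i, jdxB d i, jdxC d i} : Finset (Fin (3*d))) := by
  have hBmem : mkp (i:ℝ) ((i:ℝ)^2 - 1/5) ∈ Bset i.1 := by
    refine ⟨?_, ?_, ?_, ?_⟩ <;> simp only [mkp0, mkp1]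
    · nlinarith [sq_nonneg (i:ℝ)]
    · unfold lam; nlinarith
    · linarith [Nat.cast_nonneg (α := ℝ) i.1]
    · linarith [Nat.cast_nonneg (α := ℝ) i.1]
  have hCmem : mkp (i:ℝ) ((i:ℝ)^2 - 1/5) ∈ Cset d i.1 := by
    refine ⟨hBmem, ?_, ?_⟩
    · intro _
      simp only [mkp0, mkp1]; unfold LL
      nlinarith [sq_nonneg ((i:ℝ) - 1/2), Nat.cast_nonneg (α := ℝ) i.1]
    · intro _
      simp only [mkp0, mkp1]; unfold LR
      nlinarith [sq_nonneg ((i:ℝ) + 1/2), Nat.cast_nonneg (α := ℝ) i.1]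
  apply patt_spec
  · intro i'
    have e : jdxA d i' ∈ ({jdxA d i, jdxB d i, jdxC d i} : Finset (Fin (3*d))) ↔
        i'.1 = i.1 := by simp [eqAA, neAB, neAC]
    rw [e]
    constructor
    · intro hA
      by_contra hne
      have := hA i.1 i.2 (by omega)
      simp only [mkp0, mkp1] at this; unfold lam at this; nlinarith
    · intro h
      intro k hk hki
      simp only [mkp0, mkp1]; unfold lam
      have hki' : k ≠ i.1 := by omega
      nlinarith [cast_sq_ge_one hki']
  · intro i'
    have e : jdxB d i' ∈ ({jdxA d i, jdxB d i, jdxC d i} : Finset (Fin (3*d))) ↔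
        i'.1 = i.1 := by simp [eqBB, neBA, neBC]
    rw [e]
    constructor
    · intro hB
      exact Bpin1 hB (by norm_num) (by norm_num)
    · intro h; rw [h]; exact hBmem
  · intro i'
    have e : jdxC d i' ∈ ({jdxA d i, jdxB d i, jdxC d i} : Finset (Fin (3*d))) ↔
        i'.1 = i.1 := by simp [eqCC, neCA, neCB]
    rw [e]
    constructor
    · intro hC
      exact Bpin1 hC.1 (by norm_num) (by norm_num)
    · intro h; rw [h]; exact hCmem

/-- witness for `{B i, C i}` -/
lemma wit_i (d : ℕ) (hd : 2 ≤ d) (i : Fin d) :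
    ∃ p : Euc 2, ∀ m : Fin (3*d),
      p ∈ US d m ↔ m ∈ ({jdxB d i, jdxC d i} : Finset (Fin (3*d))) := by
  rcases Nat.eq_zero_or_pos i.1 with h0 | hpos
  · -- i = 0 : take (1/5, -7/10)
    refine ⟨mkp (1/5) (-7/10), ?_⟩
    have hBm : mkp (1/5) (-7/10) ∈ Bset i.1 := by
      rw [h0]
      refine ⟨by norm_num, ?_, by norm_num, by norm_num⟩
      simp only [mkp0, mkp1]; unfold lam; norm_num
    have hCm : mkp (1/5) (-7/10) ∈ Cset d i.1 := by
      refine ⟨hBm, ?_, ?_⟩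
      · rw [h0]; intro h; omega
      · rw [h0]; intro _
        simp only [mkp0, mkp1]; unfold LR; norm_num
    apply patt_spec
    · intro i'
      refine iff_of_false ?_ (by simp [neAB, neAC])
      intro hA
      by_cases hz : i'.1 = 0
      · have := hA 1 (by omega) (by omega)
        simp only [mkp0, mkp1] at this; unfold lam at this; norm_num at this
      · have := hA 0 (by omega) (by omega)
        simp only [mkp0, mkp1] at this; unfold lam at this; norm_num at this
    · intro i'
      have e : jdxB d i' ∈ ({jdxB d i, jdxC d i} : Finset (Fin (3*d))) ↔ i'.1 = i.1 := by
        simp [eqBB, neBC]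
      rw [e]
      constructor
      · intro hB
        have := Bpin1 (n := 0) hB (by norm_num) (by norm_num)
        omega
      · intro h; rw [h]; exact hBm
    · intro i'
      have e : jdxC d i' ∈ ({jdxB d i, jdxC d i} : Finset (Fin (3*d))) ↔ i'.1 = i.1 := by
        simp [eqCC, neCB]
      rw [e]
      constructor
      · intro hC
        have := Bpin1 (n := 0) hC.1 (by norm_num) (by norm_num)
        omega
      · intro h; rw [h]; exact hCm
  · -- i = n0 + 1 : take (n0 + 4/5, n0^2 + (8/5) n0 - 1/10)
    obtain ⟨n0, hn0⟩ : ∃ n0, i.1 = n0 + 1 := ⟨i.1 - 1, by omega⟩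
    have hdn : n0 + 1 < d := by have := i.2; omega
    have hc0 : (0:ℝ) ≤ (n0:ℝ) := Nat.cast_nonneg n0
    refine ⟨mkp ((n0:ℝ) + 4/5) ((n0:ℝ)^2 + (8/5)*(n0:ℝ) - 1/10), ?_⟩
    have hBm : mkp ((n0:ℝ) + 4/5) ((n0:ℝ)^2 + (8/5)*(n0:ℝ) - 1/10) ∈ Bset i.1 := by
      rw [hn0]
      refine ⟨?_, ?_, ?_, ?_⟩ <;> simp only [mkp0, mkp1]
      · nlinarith [sq_nonneg (n0:ℝ)]
      · unfold lam; push_cast; nlinarith [sq_nonneg (n0:ℝ)]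
      · push_cast; linarith
      · push_cast; linarith
    have hCm : mkp ((n0:ℝ) + 4/5) ((n0:ℝ)^2 + (8/5)*(n0:ℝ) - 1/10) ∈ Cset d i.1 := by
      refine ⟨hBm, ?_, ?_⟩ <;> rw [hn0]
      · intro _
        simp only [mkp0, mkp1]; unfold LL; push_cast
        nlinarith [sq_nonneg ((n0:ℝ) + 1/2)]
      · intro _
        simp only [mkp0, mkp1]; unfold LR; push_cast
        nlinarith [sq_nonneg ((n0:ℝ) + 3/2)]
    apply patt_spec
    · intro i'
      refine iff_of_false ?_ (by simp [neAB, neAC])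
      intro hA
      by_cases hz : i'.1 = n0 + 1
      · have := hA n0 (by omega) (by omega)
        simp only [mkp0, mkp1] at this; unfold lam at this; push_cast at this
        nlinarith [sq_nonneg (n0:ℝ)]
      · have := hA (n0+1) (by omega) (by omega)
        simp only [mkp0, mkp1] at this; unfold lam at this; push_cast at this
        nlinarith [sq_nonneg (n0:ℝ)]
    · intro i'
      have e : jdxB d i' ∈ ({jdxB d i, jdxC d i} : Finset (Fin (3*d))) ↔ i'.1 = i.1 := by
        simp [eqBB, neBC]
      rw [e]
      constructor
      · intro hB
        have := Bpin1 (n := n0 + 1) hB (by push_cast; linarith) (by push_cast; linarith)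
        omega
      · intro h; rw [h]; exact hBm
    · intro i'
      have e : jdxC d i' ∈ ({jdxB d i, jdxC d i} : Finset (Fin (3*d))) ↔ i'.1 = i.1 := by
        simp [eqCC, neCB]
      rw [e]
      constructor
      · intro hC
        have := Bpin1 (n := n0 + 1) hC.1 (by push_cast; linarith) (by push_cast; linarith)
        omega
      · intro h; rw [h]; exact hCm

/-- witness for `{B i, B j}`, `j = i+1` -/
lemma wit_iii (d : ℕ) (i j : Fin d) (hij : (j:ℕ) = (i:ℕ) + 1) :
    ∃ p : Euc 2, ∀ m : Fin (3*d),
      p ∈ US d m ↔ m ∈ ({jdxB d i, jdxB d j} : Finset (Fin (3*d))) := by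
  have hdn : i.1 + 1 < d := by have := j.2; omega
  have hc0 : (0:ℝ) ≤ (i.1:ℝ) := Nat.cast_nonneg _
  refine ⟨mkp ((i.1:ℝ) + 1/2) (-9/10), ?_⟩
  have hBi : mkp ((i.1:ℝ) + 1/2) (-9/10) ∈ Bset i.1 := by
    refine ⟨by norm_num, ?_, ?_, ?_⟩ <;> simp only [mkp0, mkp1]
    · unfold lam; nlinarith [sq_nonneg (i.1:ℝ)]
    · linarith
    · linarith
  have hBj : mkp ((i.1:ℝ) + 1/2) (-9/10) ∈ Bset (i.1 + 1) := by
    refine ⟨by norm_num, ?_, ?_, ?_⟩ <;> simp only [mkp0, mkp1]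
    · unfold lam; push_cast; nlinarith [sq_nonneg (i.1:ℝ)]
    · push_cast; linarith
    · push_cast; linarith
  apply patt_spec
  · intro i'
    refine iff_of_false ?_ (by simp [neAB])
    intro hA
    by_cases hz : i'.1 = i.1
    · have := hA (i.1+1) (by omega) (by omega)
      simp only [mkp0, mkp1] at this; unfold lam at this; push_cast at this
      nlinarith [sq_nonneg (i.1:ℝ)]
    · have := hA i.1 i.2 (by omega)
      simp only [mkp0, mkp1] at this; unfold lam at this
      nlinarith [sq_nonneg (i.1:ℝ)]
  · intro i'
    have e : jdxB d i' ∈ ({jdxB d i, jdxB d j} : Finset (Fin (3*d))) ↔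
        (i'.1 = i.1 ∨ i'.1 = i.1 + 1) := by simp [eqBB, hij]
    rw [e]
    constructor
    · intro hB
      exact Bpin2 hB (by linarith) (by linarith)
    · rintro (h | h)
      · rw [h]; exact hBi
      · rw [h]; exact hBj
  · intro i'
    refine iff_of_false ?_ (by simp [neCB])
    intro hC
    rcases Bpin2 (n := i.1) hC.1 (by linarith) (by linarith) with h | h
    · have := (h ▸ hC).2.2 (by omega)
      simp only [mkp0, mkp1] at this; unfold LR at this
      nlinarith [sq_nonneg (i.1:ℝ)]
    · have := (h ▸ hC).2.1 (by omega)
      simp only [mkp0, mkp1] at this; unfold LL at this; push_cast at this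
      nlinarith [sq_nonneg (i.1:ℝ)]

/-- witness for `{B i, B j, C i}`, `j = i+1` -/
lemma wit_ii (d : ℕ) (i j : Fin d) (hij : (j:ℕ) = (i:ℕ) + 1) :
    ∃ p : Euc 2, ∀ m : Fin (3*d),
      p ∈ US d m ↔ m ∈ ({jdxB d i, jdxB d j, jdxC d i} : Finset (Fin (3*d))) := by
  have hdn : i.1 + 1 < d := by have := j.2; omega
  have hc0 : (0:ℝ) ≤ (i.1:ℝ) := Nat.cast_nonneg _
  refine ⟨mkp ((i.1:ℝ) + 3/8) ((i.1:ℝ)^2 + (5/8)*(i.1:ℝ) - 3/8), ?_⟩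
  have hBi : mkp ((i.1:ℝ) + 3/8) ((i.1:ℝ)^2 + (5/8)*(i.1:ℝ) - 3/8) ∈ Bset i.1 := by
    refine ⟨?_, ?_, ?_, ?_⟩ <;> simp only [mkp0, mkp1]
    · nlinarith [sq_nonneg (i.1:ℝ)]
    · unfold lam; nlinarith
    · linarith
    · linarith
  have hBj : mkp ((i.1:ℝ) + 3/8) ((i.1:ℝ)^2 + (5/8)*(i.1:ℝ) - 3/8) ∈ Bset (i.1 + 1) := by
    refine ⟨?_, ?_, ?_, ?_⟩ <;> simp only [mkp0, mkp1]
    · nlinarith [sq_nonneg (i.1:ℝ)]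
    · unfold lam; push_cast; nlinarith
    · push_cast; linarith
    · push_cast; linarith
  have hCi : mkp ((i.1:ℝ) + 3/8) ((i.1:ℝ)^2 + (5/8)*(i.1:ℝ) - 3/8) ∈ Cset d i.1 := by
    refine ⟨hBi, ?_, ?_⟩
    · intro h1
      have hc1 : (1:ℝ) ≤ (i.1:ℝ) := by exact_mod_cast h1
      simp only [mkp0, mkp1]; unfold LL
      nlinarith [sq_nonneg (i.1:ℝ)]
    · intro _
      simp only [mkp0, mkp1]; unfold LR
      nlinarith [sq_nonneg (i.1:ℝ)]
  apply patt_spec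
  · intro i'
    refine iff_of_false ?_ (by simp [neAB, neAC])
    intro hA
    by_cases hz : i'.1 = i.1
    · have := hA (i.1+1) (by omega) (by omega)
      simp only [mkp0, mkp1] at this; unfold lam at this; push_cast at this
      nlinarith [sq_nonneg (i.1:ℝ)]
    · have := hA i.1 i.2 (by omega)
      simp only [mkp0, mkp1] at this; unfold lam at this
      nlinarith [sq_nonneg (i.1:ℝ)]
  · intro i'
    have e : jdxB d i' ∈ ({jdxB d i, jdxB d j, jdxC d i} : Finset (Fin (3*d))) ↔
        (i'.1 = i.1 ∨ i'.1 = i.1 + 1) := by simp [eqBB, neBC, hij]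
    rw [e]
    constructor
    · intro hB
      exact Bpin2 hB (by linarith) (by linarith)
    · rintro (h | h)
      · rw [h]; exact hBi
      · rw [h]; exact hBj
  · intro i'
    have e : jdxC d i' ∈ ({jdxB d i, jdxB d j, jdxC d i} : Finset (Fin (3*d))) ↔
        i'.1 = i.1 := by simp [eqCC, neCB]
    rw [e]
    constructor
    · intro hC
      rcases Bpin2 (n := i.1) hC.1 (by linarith) (by linarith) with h | h
      · exact h
      · exfalso
        have := (h ▸ hC).2.1 (by omega)
        simp only [mkp0, mkp1] at this; unfold LL at this; push_cast at this
        nlinarith [sq_nonneg (i.1:ℝ)]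
    · intro h; rw [h]; exact hCi

/-- witness for `{B i, B j, C j}`, `j = i+1` -/
lemma wit_iv (d : ℕ) (i j : Fin d) (hij : (j:ℕ) = (i:ℕ) + 1) :
    ∃ p : Euc 2, ∀ m : Fin (3*d),
      p ∈ US d m ↔ m ∈ ({jdxB d i, jdxB d j, jdxC d j} : Finset (Fin (3*d))) := by
  have hdn : i.1 + 1 < d := by have := j.2; omega
  have hc0 : (0:ℝ) ≤ (i.1:ℝ) := Nat.cast_nonneg _
  refine ⟨mkp ((i.1:ℝ) + 5/8) ((i.1:ℝ)^2 + (5/8)*(i.1:ℝ) - 3/8), ?_⟩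
  have hBi : mkp ((i.1:ℝ) + 5/8) ((i.1:ℝ)^2 + (5/8)*(i.1:ℝ) - 3/8) ∈ Bset i.1 := by
    refine ⟨?_, ?_, ?_, ?_⟩ <;> simp only [mkp0, mkp1]
    · nlinarith [sq_nonneg (i.1:ℝ)]
    · unfold lam; nlinarith
    · linarith
    · linarith
  have hBj : mkp ((i.1:ℝ) + 5/8) ((i.1:ℝ)^2 + (5/8)*(i.1:ℝ) - 3/8) ∈ Bset (i.1 + 1) := by
    refine ⟨?_, ?_, ?_, ?_⟩ <;> simp only [mkp0, mkp1]
    · nlinarith [sq_nonneg (i.1:ℝ)]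
    · unfold lam; push_cast; nlinarith
    · push_cast; linarith
    · push_cast; linarith
  have hCj : mkp ((i.1:ℝ) + 5/8) ((i.1:ℝ)^2 + (5/8)*(i.1:ℝ) - 3/8) ∈ Cset d (i.1 + 1) := by
    refine ⟨hBj, ?_, ?_⟩
    · intro _
      simp only [mkp0, mkp1]; unfold LL; push_cast
      nlinarith [sq_nonneg (i.1:ℝ), sq_nonneg ((i.1:ℝ) - 1)]
    · intro _
      simp only [mkp0, mkp1]; unfold LR; push_cast
      nlinarith [sq_nonneg (i.1:ℝ)]
  apply patt_spec
  · intro i'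
    refine iff_of_false ?_ (by simp [neAB, neAC])
    intro hA
    by_cases hz : i'.1 = i.1
    · have := hA (i.1+1) (by omega) (by omega)
      simp only [mkp0, mkp1] at this; unfold lam at this; push_cast at this
      nlinarith [sq_nonneg (i.1:ℝ)]
    · have := hA i.1 i.2 (by omega)
      simp only [mkp0, mkp1] at this; unfold lam at this
      nlinarith [sq_nonneg (i.1:ℝ)]
  · intro i'
    have e : jdxB d i' ∈ ({jdxB d i, jdxB d j, jdxC d j} : Finset (Fin (3*d))) ↔
        (i'.1 = i.1 ∨ i'.1 = i.1 + 1) := by simp [eqBB, neBC, hij]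
    rw [e]
    constructor
    · intro hB
      exact Bpin2 hB (by linarith) (by linarith)
    · rintro (h | h)
      · rw [h]; exact hBi
      · rw [h]; exact hBj
  · intro i'
    have e : jdxC d i' ∈ ({jdxB d i, jdxB d j, jdxC d j} : Finset (Fin (3*d))) ↔
        i'.1 = i.1 + 1 := by simp [eqCC, neCB, hij]
    rw [e]
    constructor
    · intro hC
      rcases Bpin2 (n := i.1) hC.1 (by linarith) (by linarith) with h | h
      · exfalso
        have := (h ▸ hC).2.2 (by omega)
        simp only [mkp0, mkp1] at this; unfold LR at this
        nlinarith [sq_nonneg (i.1:ℝ)]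
      · exact h
    · intro h; rw [h]; exact hCj

end C22

/-- The code `C_{(2,2,d)}` has an open convex realization in `ℝ^2`. -/
theorem code22d_open_in_plane (d : ℕ) (hd : 2 ≤ d) :
    HasOpenReal (code22d d) 2 := by
  refine ⟨C22.US d, ?_, ?_, ?_⟩
  · intro m
    unfold C22.US
    split_ifs with h1 h2
    · exact C22.convex_Aset d m.1
    · exact C22.convex_Bset _
    · exact C22.convex_Cset d _
  · intro m
    unfold C22.US
    split_ifs with h1 h2
    · exact C22.isOpen_Aset d m.1
    · exact C22.isOpen_Bset _
    · exact C22.isOpen_Cset d _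
  · ext σ
    constructor
    · rintro ⟨p, hp⟩
      obtain ⟨σ', hσ', hiff⟩ := C22.realize d p
      have e : σ = σ' := Finset.ext fun m => (hp m).symm.trans (hiff m)
      rw [e]; exact hσ'
    · intro hσ
      simp only [code22d, Set.mem_setOf_eq] at hσ
      rcases hσ with h | ⟨i, h⟩ | ⟨i, j, hij, h⟩ | ⟨i, j, hij, h⟩ | ⟨i, j, hij, h⟩ |
        ⟨i, h⟩ | ⟨i, h⟩ | h
      · subst h; exact ⟨C22.mkp 0 (-2), C22.wit_0 d hd⟩
      · subst h; exact C22.wit_i d hd i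
      · subst h; exact C22.wit_ii d i j hij
      · subst h; exact C22.wit_iii d i j hij
      · subst h; exact C22.wit_iv d i j hij
      · subst h; exact ⟨_, C22.wit_v d i⟩
      · subst h; exact ⟨_, C22.wit_vi d i⟩
      · subst h; exact ⟨_, C22.wit_vii d⟩


end
end

section
/- For every d with 2 ≤ d < ∞, the code C_{(2,2,d)} has a closed convex realization in ℝ^2. -/
open Set

noncomputable section

-- construction
def mkpt (x y : ℝ) : Euc 2 := (WithLp.equiv 2 (Fin 2 → ℝ)).symm ![x, y]
@[simp] lemma mkpt_app0 (x y : ℝ) : mkpt x y 0 = x := rfl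
@[simp] lemma mkpt_app1 (x y : ℝ) : mkpt x y 1 = y := rfl

def Aset (n : ℕ) : Set (Euc 2) :=
  {p | 0 ≤ p 1 ∧ p 1 ≤ 1 ∧ p 0 = (2*n + 3/2) * (1 - p 1)}
def Bset (d n : ℕ) : Set (Euc 2) :=
  {p | p 1 = 0 ∧ 2/3 ≤ p 0 ∧ 2*n ≤ p 0 ∧ p 0 ≤ 2*n+3 ∧ p 0 ≤ 2*d+1/3}
def Cset (n : ℕ) : Set (Euc 2) :=
  {p | p 1 = 0 ∧ 2*n+2/3 ≤ p 0 ∧ p 0 ≤ 2*n+7/3}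

lemma convex_Aset (n : ℕ) : Convex ℝ (Aset n) := by
  rintro p ⟨hp0, hp1, hp2⟩ q ⟨hq0, hq1, hq2⟩ a b ha hb hab
  refine ⟨?_, ?_, ?_⟩ <;> simp only [PiLp.add_apply, PiLp.smul_apply, smul_eq_mul]
  · positivity
  · nlinarith
  · rw [hp2, hq2]; ring_nf; linear_combination (2*(n:ℝ) + 3/2) * hab
lemma convex_Bset (d n : ℕ) : Convex ℝ (Bset d n) := by
  rintro p ⟨h1, h2, h3, h4, h5⟩ q ⟨g1, g2, g3, g4, g5⟩ a b ha hb hab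
  refine ⟨?_, ?_, ?_, ?_, ?_⟩ <;> simp only [PiLp.add_apply, PiLp.smul_apply, smul_eq_mul] <;>
    nlinarith
lemma convex_Cset (n : ℕ) : Convex ℝ (Cset n) := by
  rintro p ⟨h1, h2, h3⟩ q ⟨g1, g2, g3⟩ a b ha hb hab
  refine ⟨?_, ?_, ?_⟩ <;> simp only [PiLp.add_apply, PiLp.smul_apply, smul_eq_mul] <;>
    nlinarith

lemma cont0 : Continuous fun p : Euc 2 => p 0 := (continuous_apply 0).comp (PiLp.continuous_ofLp 2 _)
lemma cont1 : Continuous fun p : Euc 2 => p 1 := (continuous_apply 1).comp (PiLp.continuous_ofLp 2 _)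

lemma closed_Aset (n : ℕ) : IsClosed (Aset n) := by
  have : Aset n = {p : Euc 2 | 0 ≤ p 1} ∩ ({p | p 1 ≤ 1} ∩ {p | p 0 = (2*n + 3/2) * (1 - p 1)}) := rfl
  rw [this]
  exact (isClosed_le continuous_const cont1).inter
    ((isClosed_le cont1 continuous_const).inter
      (isClosed_eq cont0 (continuous_const.mul (continuous_const.sub cont1))))
lemma closed_Bset (d n : ℕ) : IsClosed (Bset d n) := by
  have : Bset d n = {p : Euc 2 | p 1 = 0} ∩ ({p | 2/3 ≤ p 0} ∩ ({p | 2*(n:ℝ) ≤ p 0} ∩ ({p | p 0 ≤ 2*n+3} ∩ {p | p 0 ≤ 2*d+1/3}))) := rfl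
  rw [this]
  exact (isClosed_eq cont1 continuous_const).inter
    ((isClosed_le continuous_const cont0).inter
      ((isClosed_le continuous_const cont0).inter
        ((isClosed_le cont0 continuous_const).inter (isClosed_le cont0 continuous_const))))
lemma closed_Cset (n : ℕ) : IsClosed (Cset n) := by
  have : Cset n = {p : Euc 2 | p 1 = 0} ∩ ({p | 2*(n:ℝ)+2/3 ≤ p 0} ∩ {p | p 0 ≤ 2*n+7/3}) := rfl
  rw [this]
  exact (isClosed_eq cont1 continuous_const).inter
    ((isClosed_le continuous_const cont0).inter (isClosed_le cont0 continuous_const))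

section Idx
variable {d : ℕ}
@[simp] lemma jdxA_inj {i j : Fin d} : jdxA d i = jdxA d j ↔ i = j := by
  simp [jdxA, Fin.ext_iff]
@[simp] lemma jdxB_inj {i j : Fin d} : jdxB d i = jdxB d j ↔ i = j := by
  simp [jdxB, Fin.ext_iff]
@[simp] lemma jdxC_inj {i j : Fin d} : jdxC d i = jdxC d j ↔ i = j := by
  simp [jdxC, Fin.ext_iff]
@[simp] lemma jdxA_ne_jdxB {i j : Fin d} : jdxA d i = jdxB d j ↔ False := by
  have := i.2; simp [jdxA, jdxB, Fin.ext_iff]; omega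
@[simp] lemma jdxA_ne_jdxC {i j : Fin d} : jdxA d i = jdxC d j ↔ False := by
  have := i.2; simp [jdxA, jdxC, Fin.ext_iff]; omega
@[simp] lemma jdxB_ne_jdxA {i j : Fin d} : jdxB d i = jdxA d j ↔ False := by
  have := j.2; simp [jdxA, jdxB, Fin.ext_iff]; omega
@[simp] lemma jdxB_ne_jdxC {i j : Fin d} : jdxB d i = jdxC d j ↔ False := by
  have := i.2; simp [jdxB, jdxC, Fin.ext_iff]; omega
@[simp] lemma jdxC_ne_jdxA {i j : Fin d} : jdxC d i = jdxA d j ↔ False := by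
  have := j.2; simp [jdxA, jdxC, Fin.ext_iff]; omega
@[simp] lemma jdxC_ne_jdxB {i j : Fin d} : jdxC d i = jdxB d j ↔ False := by
  have := j.2; simp [jdxB, jdxC, Fin.ext_iff]; omega

lemma idx_cases (k : Fin (3*d)) :
    (∃ i, k = jdxA d i) ∨ (∃ i, k = jdxB d i) ∨ (∃ i, k = jdxC d i) := by
  have hk := k.2
  rcases lt_or_ge k.1 d with h | h
  · exact Or.inl ⟨⟨k.1, h⟩, by simp [jdxA, Fin.ext_iff]⟩
  · rcases lt_or_ge k.1 (2*d) with h2 | h2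
    · exact Or.inr (Or.inl ⟨⟨k.1 - d, by omega⟩, by simp [jdxB, Fin.ext_iff]; omega⟩)
    · exact Or.inr (Or.inr ⟨⟨k.1 - 2*d, by omega⟩, by simp [jdxC, Fin.ext_iff]; omega⟩)
end Idx

def Xreal (d : ℕ) (k : Fin (3*d)) : Set (Euc 2) :=
  if h : k.1 < d then Aset k.1
  else if h2 : k.1 < 2*d then Bset d (k.1 - d)
  else Cset (k.1 - 2*d)

@[simp] lemma X_jdxA {d : ℕ} (i : Fin d) : Xreal d (jdxA d i) = Aset i.1 := by
  have := i.2; simp [Xreal, jdxA, this]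
@[simp] lemma X_jdxB {d : ℕ} (i : Fin d) : Xreal d (jdxB d i) = Bset d i.1 := by
  have := i.2
  simp only [Xreal]
  rw [dif_neg (show ¬ (jdxB d i).1 < d by simp [jdxB]),
    dif_pos (show (jdxB d i).1 < 2*d by simp [jdxB]; omega)]
  show Bset d (d + i.1 - d) = Bset d i.1
  have h3 : d + i.1 - d = i.1 := by omega
  rw [h3]
@[simp] lemma X_jdxC {d : ℕ} (i : Fin d) : Xreal d (jdxC d i) = Cset i.1 := by
  have := i.2
  simp only [Xreal]
  rw [dif_neg (show ¬ (jdxC d i).1 < d by simp [jdxC]; omega),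
    dif_neg (show ¬ (jdxC d i).1 < 2*d by simp [jdxC])]
  show Cset (2 * d + i.1 - 2 * d) = Cset i.1
  have h3 : 2 * d + i.1 - 2 * d = i.1 := by omega
  rw [h3]

/-- helper to establish the pattern-iff for all indices from the three families -/
lemma mem_iff_of {d : ℕ} (p : Euc 2) (σ : Finset (Fin (3*d)))
    (hA : ∀ n : Fin d, p ∈ Aset n.1 ↔ jdxA d n ∈ σ)
    (hB : ∀ n : Fin d, p ∈ Bset d n.1 ↔ jdxB d n ∈ σ)
    (hC : ∀ n : Fin d, p ∈ Cset n.1 ↔ jdxC d n ∈ σ) :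
    ∀ k, p ∈ Xreal d k ↔ k ∈ σ := by
  intro k
  rcases idx_cases k with ⟨i, rfl⟩ | ⟨i, rfl⟩ | ⟨i, rfl⟩
  · rw [X_jdxA]; exact hA i
  · rw [X_jdxB]; exact hB i
  · rw [X_jdxC]; exact hC i

lemma mem_Aset {p : Euc 2} {m : ℕ} :
    p ∈ Aset m ↔ (0 ≤ p 1 ∧ p 1 ≤ 1 ∧ p 0 = (2*m+3/2)*(1-p 1)) := Iff.rfl
lemma mem_Bset {p : Euc 2} {d m : ℕ} :
    p ∈ Bset d m ↔ (p 1 = 0 ∧ 2/3 ≤ p 0 ∧ 2*m ≤ p 0 ∧ p 0 ≤ 2*m+3 ∧ p 0 ≤ 2*d+1/3) := Iff.rfl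
lemma mem_Cset {p : Euc 2} {m : ℕ} :
    p ∈ Cset m ↔ (p 1 = 0 ∧ 2*m+2/3 ≤ p 0 ∧ p 0 ≤ 2*m+7/3) := Iff.rfl

-- cast helpers
lemma cast_lt_of {m n : ℕ} (h : m < n) : (m:ℝ) + 1 ≤ n := by exact_mod_cast h
lemma fin_eq_of_cast {d : ℕ} {m n : Fin d} (h : (m.1:ℝ) = n.1) : m = n :=
  Fin.ext (by exact_mod_cast h)

lemma Aset_axis {m : ℕ} {x : ℝ} : mkpt x 0 ∈ Aset m ↔ x = 2*m+3/2 := by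
  simp [mem_Aset]
lemma Bset_axis {d m : ℕ} {x : ℝ} :
    mkpt x 0 ∈ Bset d m ↔ (2/3 ≤ x ∧ 2*m ≤ x ∧ x ≤ 2*m+3 ∧ x ≤ 2*d+1/3) := by
  simp [mem_Bset]
lemma Cset_axis {m : ℕ} {x : ℝ} :
    mkpt x 0 ∈ Cset m ↔ (2*m+2/3 ≤ x ∧ x ≤ 2*m+7/3) := by
  simp [mem_Cset]

lemma nle {m n : ℕ} (h : (m:ℝ) < (n:ℝ) + 1) : m ≤ n := by
  have : m < n + 1 := by exact_mod_cast h
  omega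
lemma ncast {m n : ℕ} (h : m ≤ n) : (m:ℝ) ≤ n := by exact_mod_cast h
lemma nat_eq_of_real {a b : ℕ} (h : (a:ℝ) = b) : a = b := Nat.cast_injective h

lemma forward {d : ℕ} : code22d d ⊆ codeOf (Xreal d) := by
  rintro σ (rfl | ⟨i, rfl⟩ | ⟨i, j, hij, rfl⟩ | ⟨i, j, hij, rfl⟩ | ⟨i, j, hij, rfl⟩ |
    ⟨i, rfl⟩ | ⟨i, rfl⟩ | rfl)
  · -- empty
    refine ⟨mkpt 0 (-1), mem_iff_of _ _ ?_ ?_ ?_⟩ <;> intro n <;>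
      simp [mem_Aset, mem_Bset, mem_Cset] <;> norm_num
  · -- (i) {β i, γ i} : x = 2i + 4/3
    have hi : (i.1:ℝ) + 1 ≤ d := by exact_mod_cast i.2
    refine ⟨mkpt (2*i.1+4/3) 0, mem_iff_of _ _ ?_ ?_ ?_⟩ <;> intro n <;>
      simp only [Aset_axis, Bset_axis, Cset_axis, Finset.mem_insert, Finset.mem_singleton,
        jdxA_ne_jdxB, jdxA_ne_jdxC, jdxB_ne_jdxC, jdxC_ne_jdxB, jdxB_inj, jdxC_inj,
        or_self, or_false, false_or, iff_false]
    · intro hx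
      exact absurd (nat_eq_of_real (show ((12*i.1+8:ℕ):ℝ) = (12*n.1+9:ℕ) by
        push_cast; linarith)) (by omega)
    · constructor
      · rintro ⟨h1, h2, h3, h4⟩
        have l1 : n.1 ≤ i.1 := nle (by linarith)
        have l2 : i.1 ≤ n.1 := nle (by linarith)
        exact Fin.ext (by omega)
      · rintro rfl
        refine ⟨by linarith [ncast (Nat.zero_le n.1)], by linarith, by linarith, by linarith⟩
    · constructor
      · rintro ⟨h1, h2⟩
        have l1 : n.1 ≤ i.1 := nle (by linarith)
        have l2 : i.1 ≤ n.1 := nle (by linarith)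
        exact Fin.ext (by omega)
      · rintro rfl; constructor <;> linarith
  · -- (ii) {β i, β j, γ i} : x = 2i + 13/6
    have hj : (j.1:ℝ) + 1 ≤ d := by exact_mod_cast j.2
    have hji : (j.1:ℝ) = i.1 + 1 := by exact_mod_cast hij
    refine ⟨mkpt (2*i.1+13/6) 0, mem_iff_of _ _ ?_ ?_ ?_⟩ <;> intro n <;>
      simp only [Aset_axis, Bset_axis, Cset_axis, Finset.mem_insert, Finset.mem_singleton,
        jdxA_ne_jdxB, jdxA_ne_jdxC, jdxB_ne_jdxC, jdxC_ne_jdxB, jdxB_inj, jdxC_inj,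
        or_self, or_false, false_or, iff_false]
    · intro hx
      exact absurd (nat_eq_of_real (show ((12*i.1+13:ℕ):ℝ) = (12*n.1+9:ℕ) by
        push_cast; linarith)) (by omega)
    · constructor
      · rintro ⟨h1, h2, h3, h4⟩
        have l1 : n.1 ≤ i.1 + 1 := nle (by push_cast; linarith)
        have l2 : i.1 ≤ n.1 := nle (by linarith)
        rcases eq_or_lt_of_le l2 with he | hlt
        · exact Or.inl (Fin.ext he.symm)
        · exact Or.inr (Fin.ext (by omega))
      · rintro (rfl | rfl)
        · refine ⟨by linarith [ncast (Nat.zero_le n.1)], by linarith, by linarith, by linarith⟩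
        · refine ⟨by linarith [ncast (Nat.zero_le i.1)], by rw [hji]; linarith,
            by rw [hji]; linarith, by linarith⟩
    · constructor
      · rintro ⟨h1, h2⟩
        have l1 : n.1 ≤ i.1 := nle (by linarith)
        have l2 : i.1 ≤ n.1 := nle (by linarith)
        exact Fin.ext (by omega)
      · rintro rfl; constructor <;> linarith
  · -- (iii) {β i, β j} : x = 2i + 5/2
    have hj : (j.1:ℝ) + 1 ≤ d := by exact_mod_cast j.2
    have hji : (j.1:ℝ) = i.1 + 1 := by exact_mod_cast hij
    refine ⟨mkpt (2*i.1+5/2) 0, mem_iff_of _ _ ?_ ?_ ?_⟩ <;> intro n <;>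
      simp only [Aset_axis, Bset_axis, Cset_axis, Finset.mem_insert, Finset.mem_singleton,
        jdxA_ne_jdxB, jdxA_ne_jdxC, jdxB_ne_jdxC, jdxC_ne_jdxB, jdxB_inj, jdxC_inj,
        or_self, or_false, false_or, iff_false]
    · intro hx
      exact absurd (nat_eq_of_real (show ((4*i.1+5:ℕ):ℝ) = (4*n.1+3:ℕ) by
        push_cast; linarith)) (by omega)
    · constructor
      · rintro ⟨h1, h2, h3, h4⟩
        have l1 : n.1 ≤ i.1 + 1 := nle (by push_cast; linarith)
        have l2 : i.1 ≤ n.1 := nle (by linarith)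
        rcases eq_or_lt_of_le l2 with he | hlt
        · exact Or.inl (Fin.ext he.symm)
        · exact Or.inr (Fin.ext (by omega))
      · rintro (rfl | rfl)
        · refine ⟨by linarith [ncast (Nat.zero_le n.1)], by linarith, by linarith, by linarith⟩
        · refine ⟨by linarith [ncast (Nat.zero_le i.1)], by rw [hji]; linarith,
            by rw [hji]; linarith, by linarith⟩
    · rintro ⟨h1, h2⟩
      have l1 : n.1 ≤ i.1 := nle (by linarith)
      have l2 : i.1 < n.1 := by exact_mod_cast (show (i.1:ℝ) < n.1 by linarith)
      omega
  · -- (iv) {β i, β j, γ j} : x = 2i + 17/6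
    have hj : (j.1:ℝ) + 1 ≤ d := by exact_mod_cast j.2
    have hji : (j.1:ℝ) = i.1 + 1 := by exact_mod_cast hij
    refine ⟨mkpt (2*i.1+17/6) 0, mem_iff_of _ _ ?_ ?_ ?_⟩ <;> intro n <;>
      simp only [Aset_axis, Bset_axis, Cset_axis, Finset.mem_insert, Finset.mem_singleton,
        jdxA_ne_jdxB, jdxA_ne_jdxC, jdxB_ne_jdxC, jdxC_ne_jdxB, jdxB_inj, jdxC_inj,
        or_self, or_false, false_or, iff_false]
    · intro hx
      exact absurd (nat_eq_of_real (show ((12*i.1+17:ℕ):ℝ) = (12*n.1+9:ℕ) by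
        push_cast; linarith)) (by omega)
    · constructor
      · rintro ⟨h1, h2, h3, h4⟩
        have l1 : n.1 ≤ i.1 + 1 := nle (by push_cast; linarith)
        have l2 : i.1 ≤ n.1 := nle (by linarith)
        rcases eq_or_lt_of_le l2 with he | hlt
        · exact Or.inl (Fin.ext he.symm)
        · exact Or.inr (Fin.ext (by omega))
      · rintro (rfl | rfl)
        · refine ⟨by linarith [ncast (Nat.zero_le n.1)], by linarith, by linarith, by linarith⟩
        · refine ⟨by linarith [ncast (Nat.zero_le i.1)], by rw [hji]; linarith,
            by rw [hji]; linarith, by linarith⟩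
    · constructor
      · rintro ⟨h1, h2⟩
        have l1 : n.1 ≤ i.1 + 1 := nle (by push_cast; linarith)
        have l2 : i.1 + 1 ≤ n.1 := by
          have : i.1 < n.1 := by exact_mod_cast (show (i.1:ℝ) < n.1 by linarith)
          omega
        exact Fin.ext (by omega)
      · rintro rfl; rw [hji]; constructor <;> linarith
  · -- (v) {α i, β i, γ i} : x = 2i + 3/2
    have hi : (i.1:ℝ) + 1 ≤ d := by exact_mod_cast i.2
    refine ⟨mkpt (2*i.1+3/2) 0, mem_iff_of _ _ ?_ ?_ ?_⟩ <;> intro n <;>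
      simp only [Aset_axis, Bset_axis, Cset_axis, Finset.mem_insert, Finset.mem_singleton,
        jdxA_ne_jdxB, jdxA_ne_jdxC, jdxA_inj, jdxB_ne_jdxA, jdxB_ne_jdxC, jdxC_ne_jdxA,
        jdxC_ne_jdxB, jdxB_inj, jdxC_inj, or_self, or_false, false_or, iff_false]
    · constructor
      · intro hx
        exact (Fin.ext (nat_eq_of_real (by linarith))).symm
      · rintro rfl; ring
    · constructor
      · rintro ⟨h1, h2, h3, h4⟩
        have l1 : n.1 ≤ i.1 := nle (by linarith)
        have l2 : i.1 ≤ n.1 := nle (by linarith)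
        exact Fin.ext (by omega)
      · rintro rfl
        refine ⟨by linarith [ncast (Nat.zero_le n.1)], by linarith, by linarith, by linarith⟩
    · constructor
      · rintro ⟨h1, h2⟩
        have l1 : n.1 ≤ i.1 := nle (by linarith)
        have l2 : i.1 ≤ n.1 := nle (by linarith)
        exact Fin.ext (by omega)
      · rintro rfl; constructor <;> linarith
  · -- (vi) {α i}
    refine ⟨mkpt ((2*i.1+3/2)/2) (1/2), mem_iff_of _ _ ?_ ?_ ?_⟩ <;> intro n <;>
      simp only [mem_Aset, mem_Bset, mem_Cset, mkpt_app0, mkpt_app1, Finset.mem_singleton,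
        jdxA_inj, jdxB_ne_jdxA, jdxC_ne_jdxA, iff_false]
    · constructor
      · rintro ⟨h1, h2, h3⟩
        refine (Fin.ext (nat_eq_of_real ?_)).symm
        nlinarith
      · rintro rfl
        refine ⟨by norm_num, by norm_num, by ring⟩
    · rintro ⟨h1, -⟩; norm_num at h1
    · rintro ⟨h1, -⟩; norm_num at h1
  · -- (vii) all alphas
    refine ⟨mkpt 0 1, mem_iff_of _ _ ?_ ?_ ?_⟩ <;> intro n <;>
      simp only [mem_Aset, mem_Bset, mem_Cset, mkpt_app0, mkpt_app1, Finset.mem_image,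
        Finset.mem_univ, true_and, jdxA_inj, jdxB_ne_jdxA, jdxC_ne_jdxA]
    · simp
    · simp
    · simp

lemma overlap_case {d : ℕ} {σ : Finset (Fin (3*d))} {p : Euc 2} (i j : Fin d)
    (hij : (j:ℕ) = (i:ℕ) + 1)
    (h : ∀ k, p ∈ Xreal d k ↔ k ∈ σ)
    (hy : p 1 = 0)
    (hx1 : 2*i.1+2 ≤ p 0) (hx2 : p 0 ≤ 2*i.1+3) :
    σ ∈ code22d d := by
  have hji : (j.1:ℝ) = i.1 + 1 := by exact_mod_cast hij
  have hjd : (j.1:ℝ) + 1 ≤ d := by exact_mod_cast j.2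
  have hi0 : (0:ℝ) ≤ (i.1:ℝ) := Nat.cast_nonneg _
  have mA : ∀ n : Fin d, ¬ (p ∈ Aset n.1) := by
    intro n hn
    rw [mem_Aset, hy] at hn
    obtain ⟨-, -, hx⟩ := hn
    norm_num at hx
    rcases le_or_gt n.1 i.1 with hni | hni
    · have := ncast hni; linarith
    · have : (i.1:ℝ) + 1 ≤ n.1 := by exact_mod_cast hni
      linarith
  have mB : ∀ n : Fin d, p ∈ Bset d n.1 ↔ (n = i ∨ n = j) := by
    intro n
    rw [mem_Bset]
    constructor
    · rintro ⟨-, -, g2, g3, -⟩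
      have l1 : n.1 ≤ i.1 + 1 := nle (by push_cast; linarith)
      have l2 : i.1 ≤ n.1 := nle (by linarith)
      rcases eq_or_lt_of_le l2 with he | hlt
      · exact Or.inl (Fin.ext he.symm)
      · exact Or.inr (Fin.ext (by omega))
    · rintro (rfl | rfl)
      · exact ⟨hy, by linarith, by linarith, by linarith, by linarith⟩
      · refine ⟨hy, by linarith, by rw [hji]; linarith, by rw [hji]; linarith,
          by rw [hji] at hjd; linarith⟩
  rcases le_or_gt (p 0) (2*i.1+7/3) with hcl | hcl
  · -- σ = {β i, β j, γ i}
    have mC : ∀ n : Fin d, p ∈ Cset n.1 ↔ n = i := by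
      intro n
      rw [mem_Cset]
      constructor
      · rintro ⟨-, c1, c2⟩
        have l1 : n.1 ≤ i.1 := nle (by linarith)
        have l2 : i.1 ≤ n.1 := nle (by linarith)
        exact Fin.ext (by omega)
      · rintro rfl; exact ⟨hy, by linarith, by linarith⟩
    refine Or.inr (Or.inr (Or.inl ⟨i, j, hij, ?_⟩))
    ext k
    rw [← h k]
    rcases idx_cases k with ⟨m, rfl⟩ | ⟨m, rfl⟩ | ⟨m, rfl⟩ <;>
      simp [mA m, mB m, mC m]
  · rcases lt_or_ge (p 0) (2*i.1+8/3) with hcr | hcr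
    · -- σ = {β i, β j}
      have mC : ∀ n : Fin d, ¬ (p ∈ Cset n.1) := by
        intro n hn
        rw [mem_Cset] at hn
        obtain ⟨-, c1, c2⟩ := hn
        rcases le_or_gt n.1 i.1 with hni | hni
        · have := ncast hni; linarith
        · have : (i.1:ℝ) + 1 ≤ n.1 := by exact_mod_cast hni
          linarith
      refine Or.inr (Or.inr (Or.inr (Or.inl ⟨i, j, hij, ?_⟩)))
      ext k
      rw [← h k]
      rcases idx_cases k with ⟨m, rfl⟩ | ⟨m, rfl⟩ | ⟨m, rfl⟩ <;>
        simp [mA m, mB m, mC m]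
    · -- σ = {β i, β j, γ j}
      have mC : ∀ n : Fin d, p ∈ Cset n.1 ↔ n = j := by
        intro n
        rw [mem_Cset]
        constructor
        · rintro ⟨-, c1, c2⟩
          have l1 : n.1 ≤ i.1 + 1 := nle (by push_cast; linarith)
          have l2 : i.1 < n.1 := by exact_mod_cast (show (i.1:ℝ) < n.1 by linarith)
          exact Fin.ext (by omega)
        · rintro rfl
          refine ⟨hy, by rw [hji]; linarith, by rw [hji]; linarith⟩
      refine Or.inr (Or.inr (Or.inr (Or.inr (Or.inl ⟨i, j, hij, ?_⟩))))
      ext k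
      rw [← h k]
      rcases idx_cases k with ⟨m, rfl⟩ | ⟨m, rfl⟩ | ⟨m, rfl⟩ <;>
        simp [mA m, mB m, mC m]

lemma alone_case {d : ℕ} {σ : Finset (Fin (3*d))} {p : Euc 2} (n : Fin d)
    (h : ∀ k, p ∈ Xreal d k ↔ k ∈ σ)
    (hy : p 1 = 0)
    (hb1 : 2/3 ≤ p 0) (hb2 : 2*n.1 ≤ p 0) (hb3 : p 0 ≤ 2*n.1+3) (hb4 : p 0 ≤ 2*d+1/3)
    (hl : n.1 = 0 ∨ 2*n.1+1 < p 0) (hr : d < n.1 + 2 ∨ p 0 < 2*n.1+2) :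
    σ ∈ code22d d := by
  have hnd : (n.1:ℝ) + 1 ≤ d := by exact_mod_cast n.2
  have hcn : p ∈ Cset n.1 := by
    rw [mem_Cset]
    refine ⟨hy, ?_, ?_⟩
    · rcases hl with h0 | h0
      · rw [h0]; push_cast; linarith
      · linarith
    · rcases hr with h0 | h0
      · have hdr : (d:ℝ) = n.1 + 1 := by exact_mod_cast (show d = n.1 + 1 by omega)
        linarith
      · linarith
  have mB : ∀ m : Fin d, p ∈ Bset d m.1 ↔ m = n := by
    intro m
    rw [mem_Bset]
    constructor
    · rintro ⟨-, -, g2, g3, -⟩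
      refine Fin.ext ?_
      by_contra hne
      rcases lt_or_gt_of_ne hne with hmn | hmn
      · have h0 : 2*(n.1:ℝ)+1 < p 0 := by
          rcases hl with h0 | h0
          · omega
          · exact h0
        have : (m.1:ℝ) + 1 ≤ n.1 := by exact_mod_cast hmn
        linarith
      · have h0 : p 0 < 2*(n.1:ℝ)+2 := by
          rcases hr with h0 | h0
          · have := m.2; omega
          · exact h0
        have : (n.1:ℝ) + 1 ≤ m.1 := by exact_mod_cast hmn
        linarith
    · rintro rfl; exact ⟨hy, hb1, hb2, hb3, hb4⟩
  have mC : ∀ m : Fin d, p ∈ Cset m.1 ↔ m = n := by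
    intro m
    constructor
    · intro hm
      rw [mem_Cset] at hm
      obtain ⟨-, c1, c2⟩ := hm
      refine Fin.ext ?_
      by_contra hne
      rcases lt_or_gt_of_ne hne with hmn | hmn
      · have h0 : 2*(n.1:ℝ)+1 < p 0 := by
          rcases hl with h0 | h0
          · omega
          · exact h0
        have : (m.1:ℝ) + 1 ≤ n.1 := by exact_mod_cast hmn
        linarith
      · have h0 : p 0 < 2*(n.1:ℝ)+2 := by
          rcases hr with h0 | h0
          · have := m.2; omega
          · exact h0
        have : (n.1:ℝ) + 1 ≤ m.1 := by exact_mod_cast hmn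
        linarith
    · rintro rfl; exact hcn
  have mA : ∀ m : Fin d, p ∈ Aset m.1 ↔ (m = n ∧ p 0 = 2*n.1+3/2) := by
    intro m
    rw [mem_Aset, hy]
    constructor
    · rintro ⟨-, -, hx⟩
      norm_num at hx
      have hmn : m = n := by
        refine Fin.ext ?_
        by_contra hne
        rcases lt_or_gt_of_ne hne with hmn | hmn
        · have : (m.1:ℝ) + 1 ≤ n.1 := by exact_mod_cast hmn
          linarith
        · have : (n.1:ℝ) + 1 ≤ m.1 := by exact_mod_cast hmn
          linarith
      subst hmn
      exact ⟨rfl, by linarith⟩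
    · rintro ⟨rfl, hx⟩
      exact ⟨le_refl 0, by norm_num, by rw [hx]; ring⟩
  by_cases hq : p 0 = 2*n.1+3/2
  · refine Or.inr (Or.inr (Or.inr (Or.inr (Or.inr (Or.inl ⟨n, ?_⟩)))))
    ext k
    rw [← h k]
    rcases idx_cases k with ⟨m, rfl⟩ | ⟨m, rfl⟩ | ⟨m, rfl⟩ <;>
      simp [mA m, mB m, mC m, hq]
  · refine Or.inr (Or.inl ⟨n, ?_⟩)
    ext k
    rw [← h k]
    rcases idx_cases k with ⟨m, rfl⟩ | ⟨m, rfl⟩ | ⟨m, rfl⟩ <;>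
      simp [mA m, mB m, mC m, hq]

lemma backward {d : ℕ} : codeOf (Xreal d) ⊆ code22d d := by
  rintro σ ⟨p, h⟩
  rcases Finset.eq_empty_or_nonempty σ with rfl | ⟨k0, hk0⟩
  · exact Or.inl rfl
  have hp0 : p ∈ Xreal d k0 := (h k0).2 hk0
  by_cases hy : p 1 = 0
  · -- on the axis : find some n0 with p in the B-interval bounds
    obtain ⟨n0, hb1, hb2, hb3, hb4⟩ :
        ∃ n : Fin d, 2/3 ≤ p 0 ∧ 2*n.1 ≤ p 0 ∧ p 0 ≤ 2*n.1+3 ∧ p 0 ≤ 2*d+1/3 := by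
      rcases idx_cases k0 with ⟨m, rfl⟩ | ⟨m, rfl⟩ | ⟨m, rfl⟩
      · rw [X_jdxA, mem_Aset, hy] at hp0
        obtain ⟨-, -, hx⟩ := hp0
        norm_num at hx
        have hmd : (m.1:ℝ) + 1 ≤ d := by exact_mod_cast m.2
        have hm0 : (0:ℝ) ≤ (m.1:ℝ) := Nat.cast_nonneg _
        exact ⟨m, by linarith, by linarith, by linarith, by linarith⟩
      · rw [X_jdxB, mem_Bset] at hp0
        obtain ⟨-, g1, g2, g3, g4⟩ := hp0
        exact ⟨m, g1, g2, g3, g4⟩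
      · rw [X_jdxC, mem_Cset] at hp0
        obtain ⟨-, c1, c2⟩ := hp0
        have hmd : (m.1:ℝ) + 1 ≤ d := by exact_mod_cast m.2
        have hm0 : (0:ℝ) ≤ (m.1:ℝ) := Nat.cast_nonneg _
        exact ⟨m, by linarith, by linarith, by linarith, by linarith⟩
    by_cases hleft : 1 ≤ n0.1 ∧ p 0 ≤ 2*n0.1+1
    · obtain ⟨h1, h2⟩ := hleft
      have hiv : n0.1 - 1 < d := by have := n0.2; omega
      have hcast : ((n0.1 - 1 : ℕ) : ℝ) = (n0.1:ℝ) - 1 := by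
        rw [Nat.cast_sub h1]; norm_num
      refine overlap_case ⟨n0.1 - 1, hiv⟩ n0 (by simp; omega) h hy ?_ ?_
      · show 2*((n0.1 - 1 : ℕ):ℝ) + 2 ≤ p 0
        rw [hcast]; linarith
      · show p 0 ≤ 2*((n0.1 - 1 : ℕ):ℝ) + 3
        rw [hcast]; linarith
    · by_cases hright : n0.1 + 2 ≤ d ∧ 2*n0.1+2 ≤ p 0
      · obtain ⟨h1, h2⟩ := hright
        have hjv : n0.1 + 1 < d := by omega
        refine overlap_case n0 ⟨n0.1 + 1, hjv⟩ (by simp) h hy h2 hb3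
      · push_neg at hleft hright
        refine alone_case n0 h hy hb1 hb2 hb3 hb4 ?_ ?_
        · rcases Nat.eq_zero_or_pos n0.1 with h0 | h0
          · exact Or.inl h0
          · exact Or.inr (hleft h0)
        · rcases lt_or_ge d (n0.1 + 2) with h0 | h0
          · exact Or.inl h0
          · exact Or.inr (hright h0)
  · -- off the axis : only A's can occur
    have mB : ∀ n : Fin d, ¬ (p ∈ Bset d n.1) := by
      intro n hn; exact hy (mem_Bset.1 hn).1
    have mC : ∀ n : Fin d, ¬ (p ∈ Cset n.1) := by
      intro n hn; exact hy (mem_Cset.1 hn).1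
    obtain ⟨n0, hy0, hy1, hx⟩ : ∃ n : Fin d, 0 ≤ p 1 ∧ p 1 ≤ 1 ∧ p 0 = (2*n.1+3/2)*(1-p 1) := by
      rcases idx_cases k0 with ⟨m, rfl⟩ | ⟨m, rfl⟩ | ⟨m, rfl⟩
      · rw [X_jdxA, mem_Aset] at hp0; exact ⟨m, hp0⟩
      · rw [X_jdxB] at hp0; exact absurd hp0 (mB m)
      · rw [X_jdxC] at hp0; exact absurd hp0 (mC m)
    by_cases h1 : p 1 = 1
    · -- apex : all alphas
      have hx0 : p 0 = 0 := by rw [hx, h1]; ring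
      have mA : ∀ n : Fin d, p ∈ Aset n.1 := by
        intro n; rw [mem_Aset, h1, hx0]; norm_num
      refine Or.inr (Or.inr (Or.inr (Or.inr (Or.inr (Or.inr (Or.inr ?_))))))
      ext k
      rw [← h k]
      rcases idx_cases k with ⟨m, rfl⟩ | ⟨m, rfl⟩ | ⟨m, rfl⟩ <;>
        simp [mA m, mB m, mC m]
    · -- interior of one segment : {α n0}
      have hlt : p 1 < 1 := lt_of_le_of_ne hy1 h1
      have mA : ∀ n : Fin d, p ∈ Aset n.1 ↔ n = n0 := by
        intro n
        rw [mem_Aset]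
        constructor
        · rintro ⟨-, -, hx'⟩
          have : (2*(n.1:ℝ)+3/2) = (2*n0.1+3/2) := by
            have h10 : (1:ℝ) - p 1 ≠ 0 := by linarith
            field_simp at hx' hx
            exact mul_right_cancel₀ h10 (by linarith)
          exact Fin.ext (nat_eq_of_real (by linarith))
        · rintro rfl; exact ⟨hy0, hy1, hx⟩
      refine Or.inr (Or.inr (Or.inr (Or.inr (Or.inr (Or.inr (Or.inl ⟨n0, ?_⟩))))))
      ext k
      rw [← h k]
      rcases idx_cases k with ⟨m, rfl⟩ | ⟨m, rfl⟩ | ⟨m, rfl⟩ <;>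
        simp [mA m, mB m, mC m]

/-- The code `C_{(2,2,d)}` has a closed convex realization in `ℝ^2`. -/
theorem code22d_closed_in_plane (d : ℕ) (hd : 2 ≤ d) :
    HasClosedReal (code22d d) 2 := by
  refine ⟨Xreal d, ?_, ?_, Subset.antisymm backward forward⟩
  · intro k
    rcases idx_cases k with ⟨i, rfl⟩ | ⟨i, rfl⟩ | ⟨i, rfl⟩
    · rw [X_jdxA]; exact convex_Aset _
    · rw [X_jdxB]; exact convex_Bset _ _
    · rw [X_jdxC]; exact convex_Cset _
  · intro k
    rcases idx_cases k with ⟨i, rfl⟩ | ⟨i, rfl⟩ | ⟨i, rfl⟩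
    · rw [X_jdxA]; exact closed_Aset _
    · rw [X_jdxB]; exact closed_Bset _ _
    · rw [X_jdxC]; exact closed_Cset _

end
end
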